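/- arXiv:2301.08181 — 12 statements merged into one kernel-verified Lean document; each statement's English description precedes it below -/
import Mathlib

section
/- Let A be a nonnegative matrix with entrywise positive left and right eigenvectors u' and v' for some eigenvalue λ. Then λ equals the Perron eigenvalue r of A (the nonnegative eigenvalue of maximal modulus). -/
open Matrix Finset

lemma charpoly_eval_eq {n : ℕ} (M : Matrix (Fin n) (Fin n) ℂ) (μ : ℂ) :
    M.charpoly.eval μ = (μ • (1 : Matrix (Fin n) (Fin n) ℂ) - M).det := by
  rw [Matrix.charpoly, _root_.eval_det, matPolyEquiv_charmatrix]
  simp only [Polynomial.eval_sub, Polynomial.eval_X, Polynomial.eval_C,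
    Matrix.scalar_apply, smul_eq_diagonal_mul, Matrix.mul_one]

lemma isRoot_iff_exists {n : ℕ} (M : Matrix (Fin n) (Fin n) ℂ) (μ : ℂ) :
    M.charpoly.IsRoot μ ↔ ∃ w : Fin n → ℂ, w ≠ 0 ∧ M.mulVec w = μ • w := by
  rw [Polynomial.IsRoot, charpoly_eval_eq, ← Matrix.exists_mulVec_eq_zero_iff]
  constructor
  · rintro ⟨w, hw, hmul⟩
    refine ⟨w, hw, ?_⟩
    have := hmul
    rw [Matrix.sub_mulVec, sub_eq_zero, Matrix.smul_mulVec, Matrix.one_mulVec] at this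
    exact this.symm
  · rintro ⟨w, hw, hmul⟩
    refine ⟨w, hw, ?_⟩
    rw [Matrix.sub_mulVec, sub_eq_zero, Matrix.smul_mulVec, Matrix.one_mulVec, hmul]

/-- Perron–Frobenius, part 2. -/
theorem stmt_2 {n : ℕ} (A : Matrix (Fin n) (Fin n) ℝ)
    (hA : ∀ i j, 0 ≤ A i j)
    (lam r : ℝ) (u v : Fin n → ℝ) (hu : ∀ i, 0 < u i) (hv : ∀ i, 0 < v i)
    (hAv : A.mulVec v = lam • v) (huA : A.vecMul u = lam • u)
    (hr0 : 0 ≤ r)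
    (hr_eig : ((A.map (algebraMap ℝ ℂ)).charpoly).IsRoot (r : ℂ))
    (hr_max : ∀ μ : ℂ, ((A.map (algebraMap ℝ ℂ)).charpoly).IsRoot μ → ‖μ‖ ≤ r) :
    lam = r := by
  rcases Nat.eq_zero_or_pos n with hn | hn
  · exfalso
    subst hn
    have : (A.map (algebraMap ℝ ℂ)).charpoly = 1 := by
      have hm := (A.map (algebraMap ℝ ℂ)).charpoly_monic
      have hd := (A.map (algebraMap ℝ ℂ)).charpoly_natDegree_eq_dim
      simp only [Fintype.card_fin] at hd
      exact Polynomial.Monic.natDegree_eq_zero hm |>.mp hd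
    rw [this] at hr_eig
    simp at hr_eig
  obtain ⟨i0⟩ : Nonempty (Fin n) := ⟨⟨0, hn⟩⟩
  -- lam ≥ 0
  have hlam0 : 0 ≤ lam := by
    have h1 : (A.mulVec v) i0 = lam * v i0 := by rw [hAv]; rfl
    have h2 : 0 ≤ (A.mulVec v) i0 := by
      simp only [Matrix.mulVec, dotProduct]
      exact Finset.sum_nonneg fun j _ => mul_nonneg (hA i0 j) (hv j).le
    nlinarith [hv i0, mul_nonneg (le_of_lt (hv i0)) (le_of_lt (hv i0))]
  -- lam is a root of the complex charpoly
  have hlam_root : ((A.map (algebraMap ℝ ℂ)).charpoly).IsRoot (lam : ℂ) := by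
    rw [isRoot_iff_exists]
    refine ⟨fun i => (v i : ℂ), ?_, ?_⟩
    · intro h
      have := congrFun h i0
      simp only [Pi.zero_apply, Complex.ofReal_eq_zero] at this
      exact (hv i0).ne' this
    · ext i
      have := congrFun hAv i
      simp only [Matrix.mulVec, dotProduct, Pi.smul_apply, smul_eq_mul,
        Matrix.map_apply, Complex.coe_algebraMap] at this ⊢
      exact_mod_cast this
  -- lam ≤ r
  have hle : lam ≤ r := by
    have := hr_max (lam : ℂ) hlam_root
    rwa [Complex.norm_real, Real.norm_eq_abs, abs_of_nonneg hlam0] at this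
  -- r ≤ lam
  have hge : r ≤ lam := by
    obtain ⟨w, hw, hmul⟩ := (isRoot_iff_exists _ _).mp hr_eig
    set a : Fin n → ℝ := fun i => ‖w i‖ with ha
    have ha_nonneg : ∀ i, 0 ≤ a i := fun i => norm_nonneg _
    obtain ⟨j0, hj0⟩ : ∃ j, w j ≠ 0 := by
      by_contra h
      push_neg at h
      exact hw (funext h)
    have ha_pos : 0 < a j0 := norm_pos_iff.mpr hj0
    -- entrywise: r * a i ≤ (A.mulVec a) i
    have hkey : ∀ i, r * a i ≤ (A.mulVec a) i := by
      intro i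
      have h1 : (r : ℂ) * w i = ∑ j, (A i j : ℂ) * w j := by
        have := congrFun hmul i
        simp only [Matrix.mulVec, dotProduct, Pi.smul_apply, smul_eq_mul,
          Matrix.map_apply] at this
        rw [← this]
        rfl
      calc r * a i = ‖(r : ℂ) * w i‖ := by
            rw [norm_mul, Complex.norm_real, Real.norm_eq_abs, abs_of_nonneg hr0]
        _ = ‖∑ j, (A i j : ℂ) * w j‖ := by rw [h1]
        _ ≤ ∑ j, ‖(A i j : ℂ) * w j‖ := norm_sum_le _ _
        _ = ∑ j, A i j * a j := by
            refine Finset.sum_congr rfl fun j _ => ?_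
            rw [norm_mul, Complex.norm_real, Real.norm_eq_abs, abs_of_nonneg (hA i j)]
        _ = (A.mulVec a) i := rfl
    -- sum against u
    have hsum : (lam - r) * ∑ j, u j * a j ≥ 0 := by
      have h1 : ∑ i, u i * (A.mulVec a) i = lam * ∑ j, u j * a j := by
        have : u ⬝ᵥ A.mulVec a = A.vecMul u ⬝ᵥ a := Matrix.dotProduct_mulVec u A a
        simp only [dotProduct, huA, Pi.smul_apply, smul_eq_mul] at this
        rw [this, Finset.mul_sum]
        exact Finset.sum_congr rfl fun j _ => by ring
      have h2 : ∑ i, u i * (r * a i) ≤ ∑ i, u i * (A.mulVec a) i :=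
        Finset.sum_le_sum fun i _ => mul_le_mul_of_nonneg_left (hkey i) (hu i).le
      have h3 : ∑ i, u i * (r * a i) = r * ∑ j, u j * a j := by
        rw [Finset.mul_sum]; exact Finset.sum_congr rfl fun j _ => by ring
      nlinarith
    have hpos : 0 < ∑ j, u j * a j := by
      refine Finset.sum_pos' (fun j _ => mul_nonneg (hu j).le (ha_nonneg j)) ?_
      exact ⟨j0, Finset.mem_univ _, mul_pos (hu j0) ha_pos⟩
    nlinarith
  linarith
end

section
/- Let A be an irreducible nonnegative n×n matrix with largest eigenvalue 1 and a positive vector w that is both a left and right eigenvector for eigenvalue 1, normalized so ⟨w,w⟩ = 1. If for every vector x orthogonal to w we have ⟨x, Ax⟩ ≤ γ⟨x,x⟩ for some 0 ≤ γ ≤ 1, then φ(A) ≥ (1−γ)/2. -/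
open Matrix Finset

theorem stmt_3 {n : ℕ} (A : Matrix (Fin n) (Fin n) ℝ)
    (hA : ∀ i j, 0 ≤ A i j)
    (hirr : ∀ s t : Fin n, ∃ k : ℕ, 0 < k ∧ 0 < (A ^ k) s t)
    (w : Fin n → ℝ) (hw : ∀ i, 0 < w i)
    (hAw : A.mulVec w = w) (hwA : A.vecMul w = w)
    (hwnorm : ∑ i, w i ^ 2 = 1)
    (γ : ℝ) (hγ0 : 0 ≤ γ) (hγ1 : γ ≤ 1)
    (hquad : ∀ x : Fin n → ℝ, x ⬝ᵥ w = 0 → x ⬝ᵥ A.mulVec x ≤ γ * (x ⬝ᵥ x)) :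
    ∀ S : Finset (Fin n), S.Nonempty → (∑ i ∈ S, w i ^ 2) ≤ 1 / 2 →
      (1 - γ) / 2 ≤ (∑ i ∈ S, ∑ j ∈ Sᶜ, w i * A i j * w j) / (∑ i ∈ S, w i ^ 2) := by
  intro S hS hShalf
  set μ : ℝ := ∑ i ∈ S, w i ^ 2 with hμdef
  have hμpos : 0 < μ := Finset.sum_pos (fun i _ => pow_pos (hw i) 2) hS
  -- the vector x = D_w 1_S
  set x : Fin n → ℝ := fun i => if i ∈ S then w i else 0 with hxdef
  have hww : w ⬝ᵥ w = 1 := by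
    simpa [dotProduct, sq] using hwnorm
  have hxw : x ⬝ᵥ w = μ := by
    simp only [dotProduct, hxdef, ite_mul, zero_mul]
    rw [Finset.sum_ite_mem, Finset.univ_inter]
    simp [hμdef, sq]
  have hxx : x ⬝ᵥ x = μ := by
    simp only [dotProduct, hxdef, ite_mul, zero_mul, mul_ite, mul_zero]
    rw [Finset.sum_ite_mem, Finset.univ_inter]
    simp [hμdef, sq]
  -- v = x - μ w, orthogonal to w
  set v : Fin n → ℝ := x - μ • w with hvdef
  have hvw : v ⬝ᵥ w = 0 := by
    rw [hvdef, sub_dotProduct, smul_dotProduct, hxw, hww]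
    simp
  have hvv : v ⬝ᵥ v = μ - μ ^ 2 := by
    simp only [hvdef, sub_dotProduct, dotProduct_sub, smul_dotProduct,
      dotProduct_smul, smul_eq_mul]
    rw [hxx, hww, dotProduct_comm w x, hxw]
    ring
  have hxv : x = μ • w + v := by rw [hvdef]; abel
  -- w ⬝ A v = 0 and v ⬝ A w = 0
  have hwAv : w ⬝ᵥ A.mulVec v = 0 := by
    rw [dotProduct_mulVec, hwA, dotProduct_comm]
    exact hvw
  have hvAw : v ⬝ᵥ A.mulVec w = 0 := by rw [hAw]; exact hvw
  -- decomposition of the quadratic form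
  have hxAx : x ⬝ᵥ A.mulVec x = μ ^ 2 + v ⬝ᵥ A.mulVec v := by
    rw [hxv, mulVec_add, mulVec_smul, hAw]
    simp only [add_dotProduct, dotProduct_add, smul_dotProduct, dotProduct_smul,
      smul_eq_mul]
    rw [hww, hwAv, hvw]
    ring
  -- x ⬝ A x as a double sum over S
  have hxAx2 : x ⬝ᵥ A.mulVec x = ∑ i ∈ S, ∑ j ∈ S, w i * A i j * w j := by
    simp only [dotProduct, mulVec, hxdef, mul_ite, mul_zero, ite_mul, zero_mul]
    rw [Finset.sum_ite_mem, Finset.univ_inter]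
    refine Finset.sum_congr rfl fun i _ => ?_
    rw [Finset.sum_ite_mem, Finset.univ_inter, Finset.mul_sum]
    exact Finset.sum_congr rfl fun j _ => (mul_assoc _ _ _).symm
  -- the full row sums
  have hfirst : (∑ i ∈ S, ∑ j, w i * A i j * w j) = μ := by
    rw [hμdef]
    refine Finset.sum_congr rfl fun i _ => ?_
    have h := congrFun hAw i
    simp only [mulVec, dotProduct] at h
    calc ∑ j, w i * A i j * w j = w i * ∑ j, A i j * w j := by
          rw [Finset.mul_sum]; exact Finset.sum_congr rfl fun j _ => (mul_assoc _ _ _)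
      _ = w i ^ 2 := by rw [h, sq]
  -- numerator identity
  have hN : (∑ i ∈ S, ∑ j ∈ Sᶜ, w i * A i j * w j) = μ - x ⬝ᵥ A.mulVec x := by
    rw [hxAx2, ← hfirst, ← Finset.sum_sub_distrib]
    refine Finset.sum_congr rfl fun i _ => ?_
    have := Finset.sum_add_sum_compl S (fun j => w i * A i j * w j)
    linarith
  -- apply the spectral bound
  have hq := hquad v hvw
  rw [hvv] at hq
  rw [hN, hxAx, le_div_iff₀ hμpos]
  nlinarith [mul_nonneg (mul_nonneg (sub_nonneg.2 hγ1) hμpos.le)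
    (by linarith : (0:ℝ) ≤ 1/2 - μ)]
end

section
/- Let A be an irreducible nonnegative n×n matrix with largest eigenvalue 1 and positive left-and-right eigenvector w normalized to unit length. Then (1 − σ₂(A))/2 ≤ φ(A), where σ₂(A) is the second largest singular value of A. -/
open Matrix Finset

/-- The second largest singular value of a matrix `A` whose top (unit) singular vector is `w`:
the maximum of `‖A x‖` over unit vectors `x` orthogonal to `w`. -/
noncomputable def sigma2 {n : ℕ} (A : Matrix (Fin n) (Fin n) ℝ) (w : Fin n → ℝ) : ℝ :=
  sSup {r : ℝ | ∃ x : Fin n → ℝ, x ⬝ᵥ w = 0 ∧ x ⬝ᵥ x = 1 ∧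
    r = Real.sqrt (A.mulVec x ⬝ᵥ A.mulVec x)}

lemma sigma2_bddAbove {n : ℕ} (A : Matrix (Fin n) (Fin n) ℝ) (w : Fin n → ℝ) :
    BddAbove {r : ℝ | ∃ x : Fin n → ℝ, x ⬝ᵥ w = 0 ∧ x ⬝ᵥ x = 1 ∧
      r = Real.sqrt (A.mulVec x ⬝ᵥ A.mulVec x)} := by
  refine ⟨Real.sqrt (∑ i, ∑ j, (A i j) ^ 2), ?_⟩
  rintro r ⟨x, -, hx1, rfl⟩
  apply Real.sqrt_le_sqrt
  have h0 : A.mulVec x ⬝ᵥ A.mulVec x = ∑ i, (∑ j, A i j * x j) * (∑ j, A i j * x j) := rfl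
  rw [h0]
  apply Finset.sum_le_sum
  intro i _
  have h := Finset.sum_mul_sq_le_sq_mul_sq Finset.univ (fun j => A i j) x
  have hx : ∑ j, x j ^ 2 = 1 := by
    rw [← hx1, dotProduct]; exact Finset.sum_congr rfl fun j _ => pow_two (x j)
  calc (∑ j, A i j * x j) * (∑ j, A i j * x j) = (∑ j, A i j * x j) ^ 2 := (pow_two _).symm
    _ ≤ (∑ j, (A i j) ^ 2) * ∑ j, x j ^ 2 := h
    _ = ∑ j, (A i j) ^ 2 := by rw [hx, mul_one]

lemma sigma2_nonneg {n : ℕ} (A : Matrix (Fin n) (Fin n) ℝ) (w : Fin n → ℝ) :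
    0 ≤ sigma2 A w := by
  rcases Set.eq_empty_or_nonempty {r : ℝ | ∃ x : Fin n → ℝ, x ⬝ᵥ w = 0 ∧ x ⬝ᵥ x = 1 ∧
      r = Real.sqrt (A.mulVec x ⬝ᵥ A.mulVec x)} with h | ⟨r, hr⟩
  · unfold sigma2; rw [h, Real.sSup_empty]
  · have h1 : r ≤ sigma2 A w := le_csSup (sigma2_bddAbove A w) hr
    obtain ⟨x, -, -, rfl⟩ := hr
    exact le_trans (Real.sqrt_nonneg _) h1

lemma dotProduct_self_nonneg' {n : ℕ} (v : Fin n → ℝ) : 0 ≤ v ⬝ᵥ v :=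
  Finset.sum_nonneg fun i _ => mul_self_nonneg _

lemma sigma2_key {n : ℕ} (A : Matrix (Fin n) (Fin n) ℝ) (w v : Fin n → ℝ)
    (hvw : v ⬝ᵥ w = 0) : v ⬝ᵥ A.mulVec v ≤ sigma2 A w * (v ⬝ᵥ v) := by
  by_cases hv : v = 0
  · simp [hv]
  · have hvv : 0 < v ⬝ᵥ v := by
      obtain ⟨i, hi⟩ := Function.ne_iff.mp hv
      exact Finset.sum_pos' (fun j _ => mul_self_nonneg _)
        ⟨i, Finset.mem_univ i, mul_self_pos.mpr hi⟩
    set c : ℝ := Real.sqrt (v ⬝ᵥ v) with hc_def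
    have hc : 0 < c := Real.sqrt_pos.mpr hvv
    have hc2 : c ^ 2 = v ⬝ᵥ v := Real.sq_sqrt hvv.le
    set x : Fin n → ℝ := c⁻¹ • v with hx_def
    have hx1 : x ⬝ᵥ w = 0 := by rw [hx_def, smul_dotProduct, hvw, smul_zero]
    have hx2 : x ⬝ᵥ x = 1 := by
      rw [hx_def, smul_dotProduct, dotProduct_smul, smul_eq_mul, smul_eq_mul, ← hc2]
      field_simp
    have hAx : A.mulVec x ⬝ᵥ A.mulVec x = c⁻¹ ^ 2 * (A.mulVec v ⬝ᵥ A.mulVec v) := by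
      rw [hx_def, Matrix.mulVec_smul, smul_dotProduct, dotProduct_smul, smul_eq_mul,
        smul_eq_mul, ← mul_assoc, sq]
    have hmem : Real.sqrt (A.mulVec x ⬝ᵥ A.mulVec x) ∈ {r : ℝ | ∃ x : Fin n → ℝ,
        x ⬝ᵥ w = 0 ∧ x ⬝ᵥ x = 1 ∧ r = Real.sqrt (A.mulVec x ⬝ᵥ A.mulVec x)} :=
      ⟨x, hx1, hx2, rfl⟩
    have hle : Real.sqrt (A.mulVec x ⬝ᵥ A.mulVec x) ≤ sigma2 A w :=
      le_csSup (sigma2_bddAbove A w) hmem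
    have hsq : Real.sqrt (A.mulVec x ⬝ᵥ A.mulVec x)
        = c⁻¹ * Real.sqrt (A.mulVec v ⬝ᵥ A.mulVec v) := by
      rw [hAx, Real.sqrt_mul (sq_nonneg _), Real.sqrt_sq (inv_nonneg.mpr hc.le)]
    have hAv : Real.sqrt (A.mulVec v ⬝ᵥ A.mulVec v) ≤ c * sigma2 A w := by
      rw [hsq] at hle
      calc Real.sqrt (A.mulVec v ⬝ᵥ A.mulVec v)
          = c * (c⁻¹ * Real.sqrt (A.mulVec v ⬝ᵥ A.mulVec v)) := by field_simp
        _ ≤ c * sigma2 A w := by exact mul_le_mul_of_nonneg_left hle hc.le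
    -- Cauchy-Schwarz
    have hCS : v ⬝ᵥ A.mulVec v ≤ c * Real.sqrt (A.mulVec v ⬝ᵥ A.mulVec v) := by
      have h1 : (v ⬝ᵥ A.mulVec v) ^ 2 ≤ (∑ i, v i ^ 2) * ∑ i, (A.mulVec v i) ^ 2 :=
        Finset.sum_mul_sq_le_sq_mul_sq Finset.univ v (A.mulVec v)
      have h2 : (∑ i, v i ^ 2) = v ⬝ᵥ v := by
        rw [dotProduct]; exact Finset.sum_congr rfl fun i _ => pow_two (v i)
      have h3 : (∑ i, (A.mulVec v i) ^ 2) = A.mulVec v ⬝ᵥ A.mulVec v := by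
        rw [dotProduct]; exact Finset.sum_congr rfl fun i _ => pow_two (A.mulVec v i)
      rw [h2, h3] at h1
      calc v ⬝ᵥ A.mulVec v ≤ |v ⬝ᵥ A.mulVec v| := le_abs_self _
        _ = Real.sqrt ((v ⬝ᵥ A.mulVec v) ^ 2) := (Real.sqrt_sq_eq_abs _).symm
        _ ≤ Real.sqrt ((v ⬝ᵥ v) * (A.mulVec v ⬝ᵥ A.mulVec v)) := Real.sqrt_le_sqrt h1
        _ = c * Real.sqrt (A.mulVec v ⬝ᵥ A.mulVec v) := by
            rw [Real.sqrt_mul (dotProduct_self_nonneg' v)]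
    nlinarith [Real.sqrt_nonneg (A.mulVec v ⬝ᵥ A.mulVec v)]

theorem stmt_4 {n : ℕ} (A : Matrix (Fin n) (Fin n) ℝ)
    (hA : ∀ i j, 0 ≤ A i j)
    (hirr : ∀ s t : Fin n, ∃ k : ℕ, 0 < k ∧ 0 < (A ^ k) s t)
    (w : Fin n → ℝ) (hw : ∀ i, 0 < w i)
    (hAw : A.mulVec w = w) (hwA : A.vecMul w = w)
    (hwnorm : ∑ i, w i ^ 2 = 1) :
    ∀ S : Finset (Fin n), S.Nonempty → (∑ i ∈ S, w i ^ 2) ≤ 1 / 2 →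
      (1 - sigma2 A w) / 2 ≤
        (∑ i ∈ S, ∑ j ∈ Sᶜ, w i * A i j * w j) / (∑ i ∈ S, w i ^ 2) := by
  intro S hS hhalf
  set a : ℝ := ∑ i ∈ S, w i ^ 2 with ha_def
  have ha0 : 0 < a := Finset.sum_pos (fun i _ => pow_pos (hw i) 2) hS
  have hEnn : 0 ≤ ∑ i ∈ S, ∑ j ∈ Sᶜ, w i * A i j * w j :=
    Finset.sum_nonneg fun i _ => Finset.sum_nonneg fun j _ =>
      mul_nonneg (mul_nonneg (hw i).le (hA i j)) (hw j).le
  by_cases hσ : (1 - sigma2 A w) / 2 ≤ 0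
  · exact le_trans hσ (div_nonneg hEnn ha0.le)
  push_neg at hσ
  have hσ1 : sigma2 A w < 1 := by linarith
  -- set up vectors
  set u : Fin n → ℝ := fun i => if i ∈ S then w i else 0 with hu_def
  have hww : w ⬝ᵥ w = 1 := by
    rw [dotProduct, ← hwnorm]; exact Finset.sum_congr rfl fun i _ => (pow_two (w i)).symm
  have huw : u ⬝ᵥ w = a := by
    rw [dotProduct, ha_def]
    rw [show (∑ i, u i * w i) = ∑ i, if i ∈ S then w i * w i else 0 by
      exact Finset.sum_congr rfl fun i _ => by simp [hu_def, ite_mul]]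
    rw [Finset.sum_ite_mem, Finset.univ_inter]
    exact Finset.sum_congr rfl fun i _ => (pow_two (w i)).symm
  have hwu : w ⬝ᵥ u = a := by rw [← huw, dotProduct, dotProduct]; exact Finset.sum_congr rfl fun i _ => mul_comm _ _
  have huu : u ⬝ᵥ u = a := by
    rw [dotProduct, ha_def]
    rw [show (∑ i, u i * u i) = ∑ i, if i ∈ S then w i * w i else 0 by
      exact Finset.sum_congr rfl fun i _ => by by_cases h : i ∈ S <;> simp [hu_def, h]]
    rw [Finset.sum_ite_mem, Finset.univ_inter]
    exact Finset.sum_congr rfl fun i _ => (pow_two (w i)).symm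
  set v : Fin n → ℝ := u - a • w with hv_def
  have hvw : v ⬝ᵥ w = 0 := by
    rw [hv_def, sub_dotProduct, smul_dotProduct, huw, hww, smul_eq_mul, mul_one, sub_self]
  have hwAu : w ⬝ᵥ A.mulVec u = a := by
    rw [Matrix.dotProduct_mulVec, hwA, hwu]
  have huAw : u ⬝ᵥ A.mulVec w = a := by rw [hAw, huw]
  have hwAw : w ⬝ᵥ A.mulVec w = 1 := by rw [hAw, hww]
  have hvv : v ⬝ᵥ v = a - a ^ 2 := by
    simp only [hv_def, sub_dotProduct, dotProduct_sub, smul_dotProduct, dotProduct_smul,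
      smul_eq_mul, huu, huw, hwu, hww]
    ring
  have hvAv : v ⬝ᵥ A.mulVec v = u ⬝ᵥ A.mulVec u - a ^ 2 := by
    simp only [hv_def, Matrix.mulVec_sub, Matrix.mulVec_smul, sub_dotProduct, dotProduct_sub,
      smul_dotProduct, dotProduct_smul, smul_eq_mul, hwAu, huAw, hwAw]
    ring
  have hkey := sigma2_key A w v hvw
  rw [hvAv, hvv] at hkey
  -- identify the edge sum
  have hE : ∑ i ∈ S, ∑ j ∈ Sᶜ, w i * A i j * w j = a - u ⬝ᵥ A.mulVec u := by
    have h1 : u ⬝ᵥ A.mulVec (w - u) = a - u ⬝ᵥ A.mulVec u := by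
      rw [Matrix.mulVec_sub, dotProduct_sub, huAw]
    rw [← h1, dotProduct]
    rw [← Finset.sum_subset (Finset.subset_univ S) (fun i _ hi => by
      simp [hu_def, hi])]
    refine Finset.sum_congr rfl fun i hi => ?_
    have hmv : u i * A.mulVec (w - u) i = ∑ j, u i * (A i j * (w j - u j)) := by
      rw [show A.mulVec (w - u) i = ∑ j, A i j * (w j - u j) from rfl, Finset.mul_sum]
    rw [hmv]
    rw [← Finset.sum_subset (Finset.subset_univ Sᶜ) (fun j _ hj => by
      have hjs : j ∈ S := by simpa using hj
      simp [hu_def, hjs])]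
    refine Finset.sum_congr rfl fun j hj => ?_
    have hjS : j ∉ S := Finset.mem_compl.mp hj
    simp only [hu_def, if_pos hi, if_neg hjS, Pi.sub_apply, sub_zero]
    ring
  rw [hE, le_div_iff₀ ha0]
  nlinarith [mul_nonneg (mul_nonneg (sub_nonneg.mpr hσ1.le) ha0.le) (by linarith : (0:ℝ) ≤ 1/2 - a)]
end

section
/- Let R and B be nonnegative n×n matrices having the same positive left eigenvector u and the same positive right eigenvector v for eigenvalue 1. Then for every cut S ⊆ [n], φ_S(RB) ≤ φ_S(R) + φ_S(B). -/
open Matrix Finset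

/-- submultiplicativity of the edge expansion of a cut. -/
theorem stmt_5 {n : ℕ} (R B : Matrix (Fin n) (Fin n) ℝ)
    (hR : ∀ i j, 0 ≤ R i j) (hB : ∀ i j, 0 ≤ B i j)
    (u v : Fin n → ℝ) (hu : ∀ i, 0 < u i) (hv : ∀ i, 0 < v i)
    (hRv : R.mulVec v = v) (huR : R.vecMul u = u)
    (hBv : B.mulVec v = v) (huB : B.vecMul u = u)
    (S : Finset (Fin n)) :
    (∑ i ∈ S, ∑ j ∈ Sᶜ, u i * (R * B) i j * v j) / (∑ i ∈ S, u i * v i) ≤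
      (∑ i ∈ S, ∑ j ∈ Sᶜ, u i * R i j * v j) / (∑ i ∈ S, u i * v i) +
      (∑ i ∈ S, ∑ j ∈ Sᶜ, u i * B i j * v j) / (∑ i ∈ S, u i * v i) := by
  rcases S.eq_empty_or_nonempty with rfl | hS
  · simp
  have hD : 0 < ∑ i ∈ S, u i * v i :=
    Finset.sum_pos (fun i _ => mul_pos (hu i) (hv i)) hS
  rw [← add_div, div_le_div_iff_of_pos_right hD]
  -- key numerator inequality
  have key : ∑ i ∈ S, ∑ j ∈ Sᶜ, u i * (R * B) i j * v j ≤
      (∑ i ∈ S, ∑ j ∈ Sᶜ, u i * R i j * v j) +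
      (∑ i ∈ S, ∑ j ∈ Sᶜ, u i * B i j * v j) := by
    have expand : ∑ i ∈ S, ∑ j ∈ Sᶜ, u i * (R * B) i j * v j =
        (∑ i ∈ S, ∑ j ∈ Sᶜ, ∑ k ∈ S, u i * R i k * (B k j * v j)) +
        (∑ i ∈ S, ∑ j ∈ Sᶜ, ∑ k ∈ Sᶜ, u i * R i k * (B k j * v j)) := by
      rw [← Finset.sum_add_distrib]
      refine Finset.sum_congr rfl fun i _ => ?_
      rw [← Finset.sum_add_distrib]
      refine Finset.sum_congr rfl fun j _ => ?_
      rw [Matrix.mul_apply, Finset.mul_sum, Finset.sum_mul,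
        ← Finset.sum_add_sum_compl S]
      congr 1 <;> exact Finset.sum_congr rfl fun k _ => by ring
    rw [expand, add_comm ((∑ i ∈ S, ∑ j ∈ Sᶜ, u i * R i j * v j))]
    apply add_le_add
    · -- middle index in S: bound by B-term
      rw [Finset.sum_comm]
      calc ∑ j ∈ Sᶜ, ∑ i ∈ S, ∑ k ∈ S, u i * R i k * (B k j * v j)
          = ∑ j ∈ Sᶜ, ∑ k ∈ S, (∑ i ∈ S, u i * R i k) * (B k j * v j) := by
            refine Finset.sum_congr rfl fun j _ => ?_
            rw [Finset.sum_comm]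
            exact Finset.sum_congr rfl fun k _ => by rw [Finset.sum_mul]
        _ ≤ ∑ j ∈ Sᶜ, ∑ k ∈ S, u k * (B k j * v j) := by
            refine Finset.sum_le_sum fun j _ => Finset.sum_le_sum fun k _ => ?_
            apply mul_le_mul_of_nonneg_right _ (mul_nonneg (hB k j) (hv j).le)
            calc ∑ i ∈ S, u i * R i k ≤ ∑ i, u i * R i k :=
                  Finset.sum_le_sum_of_subset_of_nonneg (Finset.subset_univ S)
                    (fun i _ _ => mul_nonneg (hu i).le (hR i k))
              _ = u k := by
                  have := congrFun huR k
                  simpa [Matrix.vecMul, dotProduct] using this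
        _ = ∑ k ∈ S, ∑ j ∈ Sᶜ, u k * B k j * v j := by
            rw [Finset.sum_comm]
            exact Finset.sum_congr rfl fun k _ =>
              Finset.sum_congr rfl fun j _ => by ring
    · -- middle index in Sᶜ: bound by R-term
      calc ∑ i ∈ S, ∑ j ∈ Sᶜ, ∑ k ∈ Sᶜ, u i * R i k * (B k j * v j)
          = ∑ i ∈ S, ∑ k ∈ Sᶜ, u i * R i k * ∑ j ∈ Sᶜ, B k j * v j := by
            refine Finset.sum_congr rfl fun i _ => ?_
            rw [Finset.sum_comm]
            exact Finset.sum_congr rfl fun k _ => by rw [Finset.mul_sum]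
        _ ≤ ∑ i ∈ S, ∑ k ∈ Sᶜ, u i * R i k * v k := by
            refine Finset.sum_le_sum fun i _ => Finset.sum_le_sum fun k _ => ?_
            apply mul_le_mul_of_nonneg_left _ (mul_nonneg (hu i).le (hR i k))
            calc ∑ j ∈ Sᶜ, B k j * v j ≤ ∑ j, B k j * v j :=
                  Finset.sum_le_sum_of_subset_of_nonneg (Finset.subset_univ Sᶜ)
                    (fun j _ _ => mul_nonneg (hB k j) (hv j).le)
              _ = v k := by
                  have := congrFun hBv k
                  simpa [Matrix.mulVec, dotProduct] using this
  linarith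
end

section
/- Let R be an irreducible nonnegative n×n matrix with positive left and right eigenvectors u and v for the Perron eigenvalue 1. Then for every positive integer k, φ(R^k) ≤ k · φ(R). -/
open Matrix Finset

/-- The edge expansion `φ(M)` of a nonnegative matrix with positive left and right
eigenvectors `u`, `v` for the Perron eigenvalue 1. -/
noncomputable def ePhi {n : ℕ} (u v : Fin n → ℝ) (M : Matrix (Fin n) (Fin n) ℝ) : ℝ :=
  sInf {x : ℝ | ∃ S : Finset (Fin n), S.Nonempty ∧
    (∑ i ∈ S, u i * v i) ≤ (1 / 2) * ∑ i, u i * v i ∧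
    x = (∑ i ∈ S, ∑ j ∈ Sᶜ, u i * M i j * v j) / (∑ i ∈ S, u i * v i)}

lemma epi_sub_lemma {n : ℕ} (u v : Fin n → ℝ) (hu : ∀ i, 0 ≤ u i) (hv : ∀ i, 0 ≤ v i)
    (A B : Matrix (Fin n) (Fin n) ℝ)
    (hA : ∀ i j, 0 ≤ A i j) (hB : ∀ i j, 0 ≤ B i j)
    (huA : A.vecMul u = u) (hBv : B.mulVec v = v) (S : Finset (Fin n)) :
    (∑ i ∈ S, ∑ j ∈ Sᶜ, u i * (A * B) i j * v j) ≤
      (∑ i ∈ S, ∑ j ∈ Sᶜ, u i * A i j * v j) + (∑ i ∈ S, ∑ j ∈ Sᶜ, u i * B i j * v j) := by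
  have hBv' : ∀ m, (∑ j ∈ Sᶜ, B m j * v j) ≤ v m := by
    intro m
    have h1 : (∑ j, B m j * v j) = v m := by
      have := congrFun hBv m
      simpa [Matrix.mulVec, dotProduct] using this
    rw [← h1]
    exact Finset.sum_le_sum_of_subset_of_nonneg (Finset.subset_univ _)
      (fun j _ _ => mul_nonneg (hB m j) (hv j))
  have huA' : ∀ m, (∑ i ∈ S, u i * A i m) ≤ u m := by
    intro m
    have h1 : (∑ i, u i * A i m) = u m := by
      have := congrFun huA m
      simpa [Matrix.vecMul, dotProduct] using this
    rw [← h1]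
    exact Finset.sum_le_sum_of_subset_of_nonneg (Finset.subset_univ _)
      (fun i _ _ => mul_nonneg (hu i) (hA i m))
  have expand : ∀ i j, u i * (A * B) i j * v j
      = (∑ m ∈ S, u i * A i m * (B m j * v j)) + ∑ m ∈ Sᶜ, u i * A i m * (B m j * v j) := by
    intro i j
    rw [Finset.sum_add_sum_compl, Matrix.mul_apply, Finset.mul_sum, Finset.sum_mul]
    exact Finset.sum_congr rfl (fun m _ => by ring)
  have h1 : (∑ i ∈ S, ∑ j ∈ Sᶜ, ∑ m ∈ S, u i * A i m * (B m j * v j))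
      ≤ ∑ i ∈ S, ∑ j ∈ Sᶜ, u i * B i j * v j := by
    calc (∑ i ∈ S, ∑ j ∈ Sᶜ, ∑ m ∈ S, u i * A i m * (B m j * v j))
        = ∑ j ∈ Sᶜ, ∑ i ∈ S, ∑ m ∈ S, u i * A i m * (B m j * v j) := Finset.sum_comm
      _ = ∑ j ∈ Sᶜ, ∑ m ∈ S, ∑ i ∈ S, u i * A i m * (B m j * v j) :=
          Finset.sum_congr rfl (fun j _ => Finset.sum_comm)
      _ = ∑ m ∈ S, ∑ j ∈ Sᶜ, ∑ i ∈ S, u i * A i m * (B m j * v j) := Finset.sum_comm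
      _ = ∑ m ∈ S, ∑ j ∈ Sᶜ, (∑ i ∈ S, u i * A i m) * (B m j * v j) :=
          Finset.sum_congr rfl (fun m _ => Finset.sum_congr rfl (fun j _ =>
            (Finset.sum_mul _ _ _).symm))
      _ ≤ ∑ m ∈ S, ∑ j ∈ Sᶜ, u m * (B m j * v j) := by
          refine Finset.sum_le_sum (fun m _ => Finset.sum_le_sum (fun j _ => ?_))
          exact mul_le_mul_of_nonneg_right (huA' m) (mul_nonneg (hB m j) (hv j))
      _ = ∑ i ∈ S, ∑ j ∈ Sᶜ, u i * B i j * v j :=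
          Finset.sum_congr rfl (fun m _ => Finset.sum_congr rfl (fun j _ => by ring))
  have h2 : (∑ i ∈ S, ∑ j ∈ Sᶜ, ∑ m ∈ Sᶜ, u i * A i m * (B m j * v j))
      ≤ ∑ i ∈ S, ∑ j ∈ Sᶜ, u i * A i j * v j := by
    calc (∑ i ∈ S, ∑ j ∈ Sᶜ, ∑ m ∈ Sᶜ, u i * A i m * (B m j * v j))
        = ∑ i ∈ S, ∑ m ∈ Sᶜ, ∑ j ∈ Sᶜ, u i * A i m * (B m j * v j) :=
          Finset.sum_congr rfl (fun i _ => Finset.sum_comm)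
      _ = ∑ i ∈ S, ∑ m ∈ Sᶜ, (u i * A i m) * ∑ j ∈ Sᶜ, B m j * v j :=
          Finset.sum_congr rfl (fun i _ => Finset.sum_congr rfl (fun m _ =>
            (Finset.mul_sum _ _ _).symm))
      _ ≤ ∑ i ∈ S, ∑ m ∈ Sᶜ, (u i * A i m) * v m := by
          refine Finset.sum_le_sum (fun i _ => Finset.sum_le_sum (fun m _ => ?_))
          exact mul_le_mul_of_nonneg_left (hBv' m) (mul_nonneg (hu i) (hA i m))
      _ = ∑ i ∈ S, ∑ j ∈ Sᶜ, u i * A i j * v j := rfl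
  calc (∑ i ∈ S, ∑ j ∈ Sᶜ, u i * (A * B) i j * v j)
      = (∑ i ∈ S, ∑ j ∈ Sᶜ, ∑ m ∈ S, u i * A i m * (B m j * v j))
        + (∑ i ∈ S, ∑ j ∈ Sᶜ, ∑ m ∈ Sᶜ, u i * A i m * (B m j * v j)) := by
        simp_rw [expand, Finset.sum_add_distrib]
    _ ≤ _ := by
        have := add_le_add h1 h2
        linarith

/-- φ(R^k) ≤ k·φ(R). -/
theorem stmt_6 {n : ℕ} (R : Matrix (Fin n) (Fin n) ℝ)
    (hR : ∀ i j, 0 ≤ R i j)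
    (hirr : ∀ s t : Fin n, ∃ k : ℕ, 0 < k ∧ 0 < (R ^ k) s t)
    (u v : Fin n → ℝ) (hu : ∀ i, 0 < u i) (hv : ∀ i, 0 < v i)
    (huR : R.vecMul u = u) (hRv : R.mulVec v = v)
    (k : ℕ) (hk : 0 < k) :
    ePhi u v (R ^ k) ≤ (k : ℝ) * ePhi u v R := by
  classical
  have hpow_nonneg : ∀ m : ℕ, ∀ i j, 0 ≤ (R ^ m) i j := by
    intro m
    induction m with
    | zero => intro i j; simp [Matrix.one_apply]; split <;> norm_num
    | succ m ih =>
      intro i j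
      rw [pow_succ, Matrix.mul_apply]
      exact Finset.sum_nonneg (fun m' _ => mul_nonneg (ih i m') (hR m' j))
  have hpow_vecMul : ∀ m : ℕ, (R ^ m).vecMul u = u := by
    intro m
    induction m with
    | zero => simp [Matrix.vecMul_one]
    | succ m ih => rw [pow_succ, ← Matrix.vecMul_vecMul, ih, huR]
  -- key per-cut bound
  have fbound : ∀ S : Finset (Fin n),
      (∑ i ∈ S, ∑ j ∈ Sᶜ, u i * (R ^ k) i j * v j)
        ≤ (k : ℝ) * ∑ i ∈ S, ∑ j ∈ Sᶜ, u i * R i j * v j := by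
    intro S
    have key : ∀ m : ℕ, (∑ i ∈ S, ∑ j ∈ Sᶜ, u i * (R ^ (m + 1)) i j * v j)
        ≤ ((m : ℝ) + 1) * ∑ i ∈ S, ∑ j ∈ Sᶜ, u i * R i j * v j := by
      intro m
      induction m with
      | zero => simp
      | succ m ih =>
        have step := epi_sub_lemma u v (fun i => (hu i).le) (fun i => (hv i).le)
          (R ^ (m + 1)) R (hpow_nonneg _) hR (hpow_vecMul _) hRv S
        rw [← pow_succ] at step
        calc (∑ i ∈ S, ∑ j ∈ Sᶜ, u i * (R ^ (m + 1 + 1)) i j * v j)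
            ≤ (∑ i ∈ S, ∑ j ∈ Sᶜ, u i * (R ^ (m + 1)) i j * v j)
              + ∑ i ∈ S, ∑ j ∈ Sᶜ, u i * R i j * v j := step
          _ ≤ ((m : ℝ) + 1) * (∑ i ∈ S, ∑ j ∈ Sᶜ, u i * R i j * v j)
              + ∑ i ∈ S, ∑ j ∈ Sᶜ, u i * R i j * v j := add_le_add_left ih _
          _ = ((m : ℝ) + 1 + 1) * ∑ i ∈ S, ∑ j ∈ Sᶜ, u i * R i j * v j := by ring
          _ = (((m + 1 : ℕ) : ℝ) + 1) * ∑ i ∈ S, ∑ j ∈ Sᶜ, u i * R i j * v j := by push_cast; ring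
    obtain ⟨m, rfl⟩ : ∃ m, k = m + 1 := ⟨k - 1, (Nat.succ_pred_eq_of_pos hk).symm⟩
    have := key m
    push_cast
    linarith
  set Q : Set ℝ := {x : ℝ | ∃ S : Finset (Fin n), S.Nonempty ∧
    (∑ i ∈ S, u i * v i) ≤ (1 / 2) * ∑ i, u i * v i ∧
    x = (∑ i ∈ S, ∑ j ∈ Sᶜ, u i * R i j * v j) / (∑ i ∈ S, u i * v i)} with hQdef
  set P : Set ℝ := {x : ℝ | ∃ S : Finset (Fin n), S.Nonempty ∧
    (∑ i ∈ S, u i * v i) ≤ (1 / 2) * ∑ i, u i * v i ∧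
    x = (∑ i ∈ S, ∑ j ∈ Sᶜ, u i * (R ^ k) i j * v j) / (∑ i ∈ S, u i * v i)} with hPdef
  have hePk : ePhi u v (R ^ k) = sInf P := rfl
  have heP : ePhi u v R = sInf Q := rfl
  by_cases hex : ∃ S : Finset (Fin n), S.Nonempty ∧
      (∑ i ∈ S, u i * v i) ≤ (1 / 2) * ∑ i, u i * v i
  · -- Q is nonempty and finite
    obtain ⟨S₀, hS₀ne, hS₀half⟩ := hex
    have hQfin : Q.Finite := by
      apply Set.Finite.subset (Set.finite_range
        (fun S : Finset (Fin n) =>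
          (∑ i ∈ S, ∑ j ∈ Sᶜ, u i * R i j * v j) / (∑ i ∈ S, u i * v i)))
      rintro x ⟨S, _, _, rfl⟩
      exact ⟨S, rfl⟩
    have hPfin : P.Finite := by
      apply Set.Finite.subset (Set.finite_range
        (fun S : Finset (Fin n) =>
          (∑ i ∈ S, ∑ j ∈ Sᶜ, u i * (R ^ k) i j * v j) / (∑ i ∈ S, u i * v i)))
      rintro x ⟨S, _, _, rfl⟩
      exact ⟨S, rfl⟩
    have hQne : Q.Nonempty := ⟨_, S₀, hS₀ne, hS₀half, rfl⟩
    obtain ⟨S₁, hS₁ne, hS₁half, hS₁eq⟩ := hQne.csInf_mem hQfin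
    have hD : 0 < ∑ i ∈ S₁, u i * v i :=
      Finset.sum_pos (fun i _ => mul_pos (hu i) (hv i)) hS₁ne
    have hmem : (∑ i ∈ S₁, ∑ j ∈ S₁ᶜ, u i * (R ^ k) i j * v j) / (∑ i ∈ S₁, u i * v i) ∈ P :=
      ⟨S₁, hS₁ne, hS₁half, rfl⟩
    calc ePhi u v (R ^ k)
        ≤ (∑ i ∈ S₁, ∑ j ∈ S₁ᶜ, u i * (R ^ k) i j * v j) / (∑ i ∈ S₁, u i * v i) :=
          csInf_le hPfin.bddBelow hmem
      _ ≤ ((k : ℝ) * ∑ i ∈ S₁, ∑ j ∈ S₁ᶜ, u i * R i j * v j) / (∑ i ∈ S₁, u i * v i) := by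
          gcongr
          exact fbound S₁
      _ = (k : ℝ) * ((∑ i ∈ S₁, ∑ j ∈ S₁ᶜ, u i * R i j * v j) / (∑ i ∈ S₁, u i * v i)) := by
          ring
      _ = (k : ℝ) * ePhi u v R := by rw [heP, ← hS₁eq]
  · have hQ0 : Q = ∅ := by
      ext x; simp only [Set.mem_empty_iff_false, iff_false, hQdef, Set.mem_setOf_eq]
      rintro ⟨S, h1, h2, _⟩; exact hex ⟨S, h1, h2⟩
    have hP0 : P = ∅ := by
      ext x; simp only [Set.mem_empty_iff_false, iff_false, hPdef, Set.mem_setOf_eq]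
      rintro ⟨S, h1, h2, _⟩; exact hex ⟨S, h1, h2⟩
    rw [hePk, heP, hQ0, hP0, Real.sInf_empty]
    simp
end

section
/- Let T be an n×n upper triangular complex matrix with operator norm ‖T‖₂ = σ ≥ 1 and every diagonal entry satisfying |T_{ii}| ≤ α < 1. Then for every positive integer k, ‖T^k‖₂ ≤ n · σⁿ · C(k+n, n) · α^{k−n}. -/
open Matrix Finset

/-- The ℓ²→ℓ² operator norm of a complex matrix. -/
noncomputable def euclidOpNormC {n : ℕ} (M : Matrix (Fin n) (Fin n) ℂ) : ℝ :=
  ‖LinearMap.toContinuousLinearMap (Matrix.toEuclideanLin M)‖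

lemma euclid_coord_le_norm {n : ℕ} (x : EuclideanSpace ℂ (Fin n)) (i : Fin n) :
    ‖x i‖ ≤ ‖x‖ := by
  rw [EuclideanSpace.norm_eq]
  calc ‖x i‖ = Real.sqrt (‖x i‖ ^ 2) := (Real.sqrt_sq (norm_nonneg _)).symm
    _ ≤ Real.sqrt (∑ j, ‖x j‖ ^ 2) := Real.sqrt_le_sqrt
        (Finset.single_le_sum (f := fun j => ‖x j‖ ^ 2) (fun j _ => sq_nonneg _)
          (Finset.mem_univ i))

lemma entry_le_euclidOpNormC {n : ℕ} (M : Matrix (Fin n) (Fin n) ℂ) (i j : Fin n) :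
    ‖M i j‖ ≤ euclidOpNormC M := by
  set L := LinearMap.toContinuousLinearMap (Matrix.toEuclideanLin M) with hL
  have h1 : (L (EuclideanSpace.single j (1:ℂ))) i = M i j := by
    show (Matrix.toEuclideanLin M (EuclideanSpace.single j (1:ℂ))) i = M i j
    rw [Matrix.toEuclideanLin_apply]
    simp [EuclideanSpace.single, Matrix.mulVec_single]
  have h2 : ‖(L (EuclideanSpace.single j (1:ℂ))) i‖ ≤ ‖L (EuclideanSpace.single j (1:ℂ))‖ :=
    euclid_coord_le_norm _ i
  have h3 : ‖L (EuclideanSpace.single j (1:ℂ))‖ ≤ ‖L‖ * ‖(EuclideanSpace.single j (1:ℂ) : EuclideanSpace ℂ (Fin n))‖ :=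
    L.le_opNorm _
  have h4 : ‖(EuclideanSpace.single j (1:ℂ) : EuclideanSpace ℂ (Fin n))‖ = 1 := by
    simp [EuclideanSpace.norm_single]
  rw [h1] at h2
  calc ‖M i j‖ = ‖M i j‖ := rfl
    _ ≤ ‖L (EuclideanSpace.single j (1:ℂ))‖ := h2
    _ ≤ ‖L‖ * 1 := by rw [← h4]; exact h3
    _ = euclidOpNormC M := by rw [mul_one]; rfl

lemma euclidOpNormC_le_of_entries {n : ℕ} (M : Matrix (Fin n) (Fin n) ℂ) (B : ℝ)
    (hB : 0 ≤ B) (h : ∀ i j, ‖M i j‖ ≤ B) :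
    euclidOpNormC M ≤ (n : ℝ) * B := by
  apply ContinuousLinearMap.opNorm_le_bound _ (by positivity)
  intro x
  set L := LinearMap.toContinuousLinearMap (Matrix.toEuclideanLin M) with hL
  -- coordinatewise Cauchy-Schwarz
  have key : ∀ i : Fin n, ‖(L x) i‖ ≤ Real.sqrt n * B * ‖x‖ := by
    intro i
    set y : EuclideanSpace ℂ (Fin n) := (WithLp.equiv 2 _).symm (fun j => star (M i j)) with hy
    have hinner : (inner ℂ y x : ℂ) = (L x) i := by
      show (inner ℂ y x : ℂ) = (Matrix.toEuclideanLin M x) i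
      rw [Matrix.toEuclideanLin_apply, PiLp.inner_apply]
      simp [hy, Matrix.mulVec, dotProduct, mul_comm]
    have hny : ‖y‖ ≤ Real.sqrt n * B := by
      rw [EuclideanSpace.norm_eq]
      have : ∑ j, ‖y j‖ ^ 2 ≤ (n : ℝ) * B ^ 2 := by
        calc ∑ j, ‖y j‖ ^ 2 ≤ ∑ _j : Fin n, B ^ 2 := by
              apply Finset.sum_le_sum
              intro j _
              have : ‖y j‖ ≤ B := by
                simpa [hy] using h i j
              exact pow_le_pow_left₀ (norm_nonneg _) this 2
          _ = (n : ℝ) * B ^ 2 := by simp [mul_comm]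
      calc Real.sqrt (∑ j, ‖y j‖ ^ 2) ≤ Real.sqrt ((n : ℝ) * B ^ 2) :=
            Real.sqrt_le_sqrt this
        _ = Real.sqrt n * B := by
            rw [Real.sqrt_mul (Nat.cast_nonneg n), Real.sqrt_sq hB]
    calc ‖(L x) i‖ = ‖(inner ℂ y x : ℂ)‖ := by rw [hinner]
      _ ≤ ‖y‖ * ‖x‖ := norm_inner_le_norm y x
      _ ≤ (Real.sqrt n * B) * ‖x‖ := by
          apply mul_le_mul_of_nonneg_right hny (norm_nonneg _)
  have hLx : ‖L x‖ ≤ Real.sqrt n * (Real.sqrt n * B * ‖x‖) := by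
    rw [EuclideanSpace.norm_eq]
    have hnn : 0 ≤ Real.sqrt n * B * ‖x‖ := by positivity
    have : ∑ i, ‖(L x) i‖ ^ 2 ≤ (n : ℝ) * (Real.sqrt n * B * ‖x‖) ^ 2 := by
      calc ∑ i, ‖(L x) i‖ ^ 2 ≤ ∑ _i : Fin n, (Real.sqrt n * B * ‖x‖) ^ 2 :=
            Finset.sum_le_sum fun i _ => pow_le_pow_left₀ (norm_nonneg _) (key i) 2
        _ = (n : ℝ) * (Real.sqrt n * B * ‖x‖) ^ 2 := by simp [mul_comm]
    calc Real.sqrt (∑ i, ‖(L x) i‖ ^ 2)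
        ≤ Real.sqrt ((n : ℝ) * (Real.sqrt n * B * ‖x‖) ^ 2) := Real.sqrt_le_sqrt this
      _ = Real.sqrt n * (Real.sqrt n * B * ‖x‖) := by
          rw [Real.sqrt_mul (Nat.cast_nonneg n), Real.sqrt_sq hnn]
  calc ‖L x‖ ≤ Real.sqrt n * (Real.sqrt n * B * ‖x‖) := hLx
    _ = (Real.sqrt n * Real.sqrt n) * B * ‖x‖ := by ring
    _ = (n : ℝ) * B * ‖x‖ := by rw [Real.mul_self_sqrt (Nat.cast_nonneg n)]

lemma blockTriangular_pow {n : ℕ} (T : Matrix (Fin n) (Fin n) ℂ)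
    (hT : T.BlockTriangular id) (k : ℕ) : (T ^ k).BlockTriangular id := by
  induction k with
  | zero => simpa using Matrix.blockTriangular_one
  | succ k ih => rw [pow_succ]; exact ih.mul hT

lemma hockey_stick (k r : ℕ) :
    ∑ s ∈ Finset.range (r + 1), (k + s).choose s = (k + 1 + r).choose r := by
  induction r with
  | zero => simp
  | succ r ih =>
      rw [Finset.sum_range_succ, ih]
      have h1 := Nat.choose_succ_succ' (k + 1 + r) r
      have e1 : k + (r + 1) = k + 1 + r := by omega
      have e2 : k + 1 + (r + 1) = k + 1 + r + 1 := by omega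
      rw [e1, e2, h1]

/-- Key entrywise bound by induction on k. -/
lemma entry_pow_bound {n : ℕ} (T : Matrix (Fin n) (Fin n) ℂ)
    (hT : T.BlockTriangular id) (σ α : ℝ) (hσ1 : 1 ≤ σ)
    (hα0 : 0 < α) (hα1 : α < 1)
    (hdiag : ∀ i, ‖T i i‖ ≤ α)
    (hent : ∀ i j, ‖T i j‖ ≤ σ) :
    ∀ k : ℕ, ∀ i j : Fin n, (i : ℕ) ≤ (j : ℕ) →
      ‖(T ^ k) i j‖ ≤
        (((k + ((j : ℕ) - (i : ℕ))).choose ((j : ℕ) - (i : ℕ))) : ℝ)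
          * σ ^ ((j : ℕ) - (i : ℕ))
          * α ^ ((k : ℤ) - (((j : ℕ) - (i : ℕ) : ℕ) : ℤ)) := by
  intro k
  induction k with
  | zero =>
      intro i j hij
      rcases eq_or_lt_of_le hij with h | h
      · have hij' : i = j := Fin.ext h
        subst hij'
        simp [Matrix.one_apply]
      · have : ((1 : Matrix (Fin n) (Fin n) ℂ)) i j = 0 := by
          apply Matrix.one_apply_ne
          intro hc; subst hc; omega
        rw [pow_zero, this]
        simp only [norm_zero]
        positivity
  | succ k ih =>
      intro i j hij
      set r : ℕ := (j : ℕ) - (i : ℕ) with hr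
      set Q : ℝ := σ ^ r * α ^ (((k : ℤ) + 1) - (r : ℤ)) with hQ
      have hQ0 : 0 ≤ Q := by positivity
      have hσ0 : (0:ℝ) < σ := lt_of_lt_of_le one_pos hσ1
      have step1 : ‖(T ^ (k+1)) i j‖
          ≤ ∑ l, ‖(T ^ k) i l‖ * ‖T l j‖ := by
        rw [pow_succ, Matrix.mul_apply]
        refine le_trans (norm_sum_le _ _) (le_of_eq ?_)
        exact Finset.sum_congr rfl fun l _ => norm_mul _ _
      set g : Fin n → ℝ := fun l =>
        if (i : ℕ) ≤ (l : ℕ) ∧ (l : ℕ) ≤ (j : ℕ) then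
          (((k + ((l : ℕ) - (i : ℕ))).choose ((l : ℕ) - (i : ℕ))) : ℝ) * Q
        else 0 with hg
      have hg0 : ∀ l, 0 ≤ g l := by
        intro l; simp only [hg]
        split
        · positivity
        · exact le_rfl
      have step2 : ∀ l, ‖(T ^ k) i l‖ * ‖T l j‖ ≤ g l := by
        intro l
        by_cases h1 : (l : ℕ) < (i : ℕ)
        · have : (T ^ k) i l = 0 := blockTriangular_pow T hT k (show id l < id i from h1)
          rw [this]
          simpa using hg0 l
        by_cases h2 : (j : ℕ) < (l : ℕ)
        · have : T l j = 0 := hT (show id j < id l from h2)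
          rw [this]
          simpa using hg0 l
        push_neg at h1 h2
        have hmem : (i : ℕ) ≤ (l : ℕ) ∧ (l : ℕ) ≤ (j : ℕ) := ⟨h1, h2⟩
        set s : ℕ := (l : ℕ) - (i : ℕ) with hs
        have hbound1 : ‖(T ^ k) i l‖
            ≤ (((k + s).choose s : ℕ) : ℝ) * σ ^ s * α ^ ((k : ℤ) - (s : ℤ)) := ih i l h1
        have hgl : g l = (((k + s).choose s : ℕ) : ℝ) * Q := by
          simp only [hg, if_pos hmem]
          rfl
        rw [hgl]
        rcases eq_or_lt_of_le h2 with hlj | hlj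
        · -- l = j
          have hlj' : l = j := Fin.ext hlj
          subst hlj'
          have hs_r : s = r := rfl
          calc ‖(T ^ k) i l‖ * ‖T l l‖
              ≤ ((((k + s).choose s : ℕ) : ℝ) * σ ^ s * α ^ ((k : ℤ) - (s : ℤ))) * α := by
                apply mul_le_mul hbound1 (hdiag l) (norm_nonneg _)
                positivity
            _ = (((k + s).choose s : ℕ) : ℝ) * Q := by
                rw [hQ, hs_r]
                rw [show ((k : ℤ) + 1) - (r : ℤ) = ((k : ℤ) - (r : ℤ)) + 1 by ring]
                rw [zpow_add₀ (ne_of_gt hα0), zpow_one]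
                ring
        · -- l < j, so s + 1 ≤ r
          have hsr : s + 1 ≤ r := by omega
          calc ‖(T ^ k) i l‖ * ‖T l j‖
              ≤ ((((k + s).choose s : ℕ) : ℝ) * σ ^ s * α ^ ((k : ℤ) - (s : ℤ))) * σ := by
                apply mul_le_mul hbound1 (hent l j) (norm_nonneg _)
                positivity
            _ = (((k + s).choose s : ℕ) : ℝ) * (σ ^ (s+1) * α ^ ((k : ℤ) - (s : ℤ))) := by
                rw [pow_succ]; ring
            _ ≤ (((k + s).choose s : ℕ) : ℝ) * Q := by
                apply mul_le_mul_of_nonneg_left _ (Nat.cast_nonneg _)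
                rw [hQ]
                apply mul_le_mul
                · exact pow_le_pow_right₀ hσ1 hsr
                · apply zpow_le_zpow_right_of_le_one₀ hα0 (le_of_lt hα1)
                  omega
                · positivity
                · positivity
      have step3 : ∑ l, ‖(T ^ k) i l‖ * ‖T l j‖ ≤ ∑ l, g l :=
        Finset.sum_le_sum fun l _ => step2 l
      have step4 : ∑ l, g l = (((k + 1 + r).choose r : ℕ) : ℝ) * Q := by
        have h1 : ∑ l, g l
            = ∑ l ∈ Finset.univ.filter
                (fun l : Fin n => (i : ℕ) ≤ (l : ℕ) ∧ (l : ℕ) ≤ (j : ℕ)),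
                (((k + ((l : ℕ) - (i : ℕ))).choose ((l : ℕ) - (i : ℕ))) : ℝ) * Q := by
          rw [Finset.sum_filter]
        rw [h1]
        have h2 : ∑ l ∈ Finset.univ.filter
              (fun l : Fin n => (i : ℕ) ≤ (l : ℕ) ∧ (l : ℕ) ≤ (j : ℕ)),
              (((k + ((l : ℕ) - (i : ℕ))).choose ((l : ℕ) - (i : ℕ))) : ℝ)
            = ∑ s ∈ Finset.range (r + 1), (((k + s).choose s : ℕ) : ℝ) := by
          have hn : 0 < n := i.pos
          have hjn : (j : ℕ) < n := j.isLt
          refine Finset.sum_nbij' (i := fun l : Fin n => (l : ℕ) - (i : ℕ))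
            (j := fun s => (⟨min ((i : ℕ) + s) (n - 1), by omega⟩ : Fin n))
            ?_ ?_ ?_ ?_ ?_
          · intro l hl
            simp only [Finset.mem_filter, Finset.mem_univ, true_and] at hl
            simp only [Finset.mem_range]
            omega
          · intro s hs
            simp only [Finset.mem_range] at hs
            simp only [Finset.mem_filter, Finset.mem_univ, true_and]
            constructor <;> omega
          · intro l hl
            simp only [Finset.mem_filter, Finset.mem_univ, true_and] at hl
            apply Fin.ext
            show min ((i : ℕ) + ((l : ℕ) - (i : ℕ))) (n - 1) = (l : ℕ)
            omega
          · intro s hs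
            simp only [Finset.mem_range] at hs
            show min ((i : ℕ) + s) (n - 1) - (i : ℕ) = s
            omega
          · intro l _
            rfl
        rw [← Finset.sum_mul, h2, ← Nat.cast_sum]
        rw [hockey_stick k r]
      calc ‖(T ^ (k+1)) i j‖
          ≤ ∑ l, ‖(T ^ k) i l‖ * ‖T l j‖ := step1
        _ ≤ ∑ l, g l := step3
        _ = (((k + 1 + r).choose r : ℕ) : ℝ) * Q := step4
        _ = (((k + 1 + r).choose r : ℕ) : ℝ) * σ ^ r * α ^ (((k:ℤ)+1) - (r : ℤ)) := by
            rw [hQ]; ring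
        _ = ((((k+1) + r).choose r : ℕ) : ℝ) * σ ^ r * α ^ ((((k:ℕ)+1 : ℕ) : ℤ) - (r : ℤ)) := by
            push_cast; ring_nf

/-- bounded norm of powers of an upper triangular matrix. -/
theorem stmt_7 {n : ℕ} (T : Matrix (Fin n) (Fin n) ℂ)
    (hT : T.BlockTriangular id)
    (σ : ℝ) (hσ : euclidOpNormC T = σ) (hσ1 : 1 ≤ σ)
    (α : ℝ) (hα0 : 0 < α) (hα1 : α < 1)
    (hdiag : ∀ i, ‖T i i‖ ≤ α)
    (k : ℕ) (hk : 0 < k) :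
    euclidOpNormC (T ^ k) ≤
      (n : ℝ) * σ ^ n * ((k + n).choose n : ℝ) * α ^ ((k : ℤ) - (n : ℤ)) := by
  have hσ0 : (0:ℝ) < σ := lt_of_lt_of_le one_pos hσ1
  have hent : ∀ i j, ‖T i j‖ ≤ σ := fun i j => hσ ▸ entry_le_euclidOpNormC T i j
  set B : ℝ := σ ^ n * (((k + n).choose n : ℕ) : ℝ) * α ^ ((k : ℤ) - (n : ℤ)) with hB
  have hB0 : 0 ≤ B := by positivity
  have hentries : ∀ i j, ‖(T ^ k) i j‖ ≤ B := by
    intro i j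
    by_cases hij : (i : ℕ) ≤ (j : ℕ)
    · have h := entry_pow_bound T hT σ α hσ1 hα0 hα1 hdiag hent k i j hij
      set r : ℕ := (j : ℕ) - (i : ℕ) with hr
      have hrn : r ≤ n := by have := j.isLt; omega
      refine le_trans h ?_
      rw [hB]
      have h1 : (((k + r).choose r : ℕ) : ℝ) ≤ (((k + n).choose n : ℕ) : ℝ) := by
        have e1 : (k + r).choose r = (k + r).choose k := by
          rw [← Nat.choose_symm (Nat.le_add_right k r)]
          congr 1; omega
        have e2 : (k + n).choose n = (k + n).choose k := by
          rw [← Nat.choose_symm (Nat.le_add_right k n)]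
          congr 1; omega
        rw [e1, e2]
        exact_mod_cast Nat.choose_le_choose k (by omega : k + r ≤ k + n)
      have h2 : σ ^ r ≤ σ ^ n := pow_le_pow_right₀ hσ1 hrn
      have h3 : α ^ ((k:ℤ) - (r:ℤ)) ≤ α ^ ((k:ℤ) - (n:ℤ)) := by
        apply zpow_le_zpow_right_of_le_one₀ hα0 (le_of_lt hα1)
        omega
      calc (((k + r).choose r : ℕ) : ℝ) * σ ^ r * α ^ ((k:ℤ) - (r:ℤ))
          ≤ (((k + n).choose n : ℕ) : ℝ) * σ ^ n * α ^ ((k:ℤ) - (n:ℤ)) := by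
            apply mul_le_mul _ h3 (by positivity) (by positivity)
            apply mul_le_mul h1 h2 (by positivity) (Nat.cast_nonneg _)
        _ = σ ^ n * (((k + n).choose n : ℕ) : ℝ) * α ^ ((k:ℤ) - (n:ℤ)) := by ring
    · have : (T ^ k) i j = 0 :=
        blockTriangular_pow T hT k (show id j < id i by simp; omega)
      rw [this]; simpa using hB0
  have := euclidOpNormC_le_of_entries (T ^ k) B hB0 hentries
  calc euclidOpNormC (T ^ k) ≤ (n : ℝ) * B := this
    _ = (n : ℝ) * σ ^ n * ((k + n).choose n : ℝ) * α ^ ((k : ℤ) - (n : ℤ)) := by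
        rw [hB]; push_cast; ring
end

section
/- Let R be an irreducible nonnegative matrix with PF eigenvalue 1 and positive eigenvectors u, v with ⟨u,v⟩ = 1, and let E_R = exp(R − I). Then: (a) E_R is nonnegative and irreducible with PF eigenvalue 1 and the same left/right eigenvectors u, v; (b) for every t ≥ 0 and every cut S, φ_S(exp(t(R − I))) ≤ t · φ_S(R). -/
open Matrix Finset

/-- The matrix exponential, `exp M = ∑_{p ≥ 0} M^p / p!`, defined entrywise. -/
noncomputable def matExp {n : ℕ} (M : Matrix (Fin n) (Fin n) ℝ) : Matrix (Fin n) (Fin n) ℝ :=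
  Matrix.of fun i j => ∑' p : ℕ, ((Nat.factorial p : ℝ)⁻¹ * (M ^ p) i j)

/-- The edge expansion of the cut `S`. -/
noncomputable def ePhiS {n : ℕ} (u v : Fin n → ℝ) (M : Matrix (Fin n) (Fin n) ℝ)
    (S : Finset (Fin n)) : ℝ :=
  (∑ i ∈ S, ∑ j ∈ Sᶜ, u i * M i j * v j) / (∑ i ∈ S, u i * v i)

/-! ### Auxiliary lemmas -/

section Normed

attribute [local instance] Matrix.linftyOpNormedRing Matrix.linftyOpNormedAlgebra
  Matrix.linftyOpNormedAddCommGroup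

variable {n : ℕ}

lemma matExp_entry_hasSum (M : Matrix (Fin n) (Fin n) ℝ) (i j : Fin n) :
    HasSum (fun p : ℕ => ((Nat.factorial p : ℝ)⁻¹ * (M ^ p) i j)) (matExp M i j) := by
  have h := NormedSpace.exp_series_hasSum_exp' (𝕂 := ℝ) M
  have h2 : HasSum (fun p : ℕ => ((Nat.factorial p : ℝ)⁻¹ • M ^ p) i j)
      ((NormedSpace.exp M) i j) := by
    have := (Pi.hasSum.mp h i)
    exact Pi.hasSum.mp this j
  have h3 : HasSum (fun p : ℕ => ((Nat.factorial p : ℝ)⁻¹ * (M ^ p) i j))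
      ((NormedSpace.exp M) i j) := by simpa [Matrix.smul_apply, smul_eq_mul] using h2
  have h4 : matExp M i j = (NormedSpace.exp M) i j := h3.tsum_eq
  rw [h4]; exact h3

lemma matExp_eq_exp (M : Matrix (Fin n) (Fin n) ℝ) : matExp M = NormedSpace.exp M := by
  ext i j
  exact HasSum.unique (matExp_entry_hasSum M i j) (by
    have h := NormedSpace.exp_series_hasSum_exp' (𝕂 := ℝ) M
    have h2 : HasSum (fun p : ℕ => ((Nat.factorial p : ℝ)⁻¹ • M ^ p) i j) (NormedSpace.exp M i j) :=
      Pi.hasSum.mp (Pi.hasSum.mp h i) j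
    simpa [Matrix.smul_apply, smul_eq_mul] using h2)

lemma exp_smul_sub_one (A : Matrix (Fin n) (Fin n) ℝ) (t : ℝ) :
    NormedSpace.exp (t • (A - 1)) = Real.exp (-t) • NormedSpace.exp (t • A) := by
  have hsplit : t • (A - 1) = t • A + (-t) • (1 : Matrix (Fin n) (Fin n) ℝ) := by
    rw [smul_sub, sub_eq_add_neg, neg_smul]
  have hcomm : Commute (t • A) ((-t) • (1 : Matrix (Fin n) (Fin n) ℝ)) :=
    (Commute.one_right (t • A)).smul_right (-t)
  have hone : NormedSpace.exp ((-t) • (1 : Matrix (Fin n) (Fin n) ℝ))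
      = Real.exp (-t) • (1 : Matrix (Fin n) (Fin n) ℝ) := by
    rw [Matrix.smul_one_eq_diagonal, Matrix.exp_diagonal, Matrix.smul_one_eq_diagonal]
    funext k
    rw [Pi.exp_def]
    simp [Real.exp_eq_exp_ℝ]
  rw [hsplit, Matrix.exp_add_of_commute _ _ hcomm, hone, mul_smul_comm, mul_one]

lemma matExp_smul_hasSum (A : Matrix (Fin n) (Fin n) ℝ) (t : ℝ) (i j : Fin n) :
    HasSum (fun p : ℕ => Real.exp (-t) * (t ^ p / (Nat.factorial p : ℝ)) * (A ^ p) i j)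
      (matExp (t • (A - 1)) i j) := by
  have h1 := matExp_entry_hasSum (t • A) i j
  have h2 : HasSum (fun p : ℕ => t ^ p / (Nat.factorial p : ℝ) * (A ^ p) i j)
      (matExp (t • A) i j) := by
    refine h1.congr_fun fun p => ?_
    rw [smul_pow, Matrix.smul_apply, smul_eq_mul]
    ring
  have h3 := h2.mul_left (Real.exp (-t))
  have h4 : matExp (t • (A - 1)) i j = Real.exp (-t) * matExp (t • A) i j := by
    rw [matExp_eq_exp, matExp_eq_exp, exp_smul_sub_one, Matrix.smul_apply, smul_eq_mul]
  rw [h4]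
  refine h3.congr_fun fun p => by ring

end Normed

lemma hasSum_exp_real (t : ℝ) :
    HasSum (fun p : ℕ => t ^ p / (Nat.factorial p : ℝ)) (Real.exp t) := by
  have := NormedSpace.expSeries_div_hasSum_exp t
  simpa [Real.exp_eq_exp_ℝ] using this

lemma hasSum_mul_exp_real (t : ℝ) :
    HasSum (fun p : ℕ => (p : ℝ) * t ^ p / (Nat.factorial p : ℝ)) (t * Real.exp t) := by
  have h0 : HasSum (fun p : ℕ => t * (t ^ p / (Nat.factorial p : ℝ))) (t * Real.exp t) :=
    (hasSum_exp_real t).mul_left t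
  have h1 : HasSum (fun p : ℕ => ((p + 1 : ℕ) : ℝ) * t ^ (p + 1) / (Nat.factorial (p + 1) : ℝ))
      (t * Real.exp t) := by
    refine h0.congr_fun fun p => ?_
    have hfac : ((Nat.factorial (p + 1)) : ℝ) = (p + 1) * Nat.factorial p := by
      rw [Nat.factorial_succ]; push_cast; ring
    have hp : (Nat.factorial p : ℝ) ≠ 0 := Nat.cast_ne_zero.mpr (Nat.factorial_ne_zero p)
    have hp1 : ((p : ℝ) + 1) ≠ 0 := by positivity
    rw [hfac, pow_succ]
    push_cast
    field_simp
  have h2 := (hasSum_nat_add_iff (f := fun p : ℕ => (p : ℝ) * t ^ p / (Nat.factorial p : ℝ)) 1).mp h1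
  simpa using h2

lemma numer_mul_le {n : ℕ} (u v : Fin n → ℝ) (hu : ∀ i, 0 ≤ u i) (hv : ∀ i, 0 ≤ v i)
    (S : Finset (Fin n)) (A B : Matrix (Fin n) (Fin n) ℝ)
    (hA : ∀ i j, 0 ≤ A i j) (hB : ∀ i j, 0 ≤ B i j)
    (hAu : A.vecMul u = u) (hBv : B.mulVec v = v) :
    ∑ i ∈ S, ∑ j ∈ Sᶜ, u i * (A * B) i j * v j ≤
      (∑ i ∈ S, ∑ j ∈ Sᶜ, u i * A i j * v j) + (∑ i ∈ S, ∑ j ∈ Sᶜ, u i * B i j * v j) := by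
  set F : Fin n → ℝ := fun k => (∑ i ∈ S, u i * A i k) * (∑ j ∈ Sᶜ, B k j * v j) with hF
  have hsplit : ∑ i ∈ S, ∑ j ∈ Sᶜ, u i * (A * B) i j * v j = ∑ k : Fin n, F k := by
    have step1 : ∑ i ∈ S, ∑ j ∈ Sᶜ, u i * (A * B) i j * v j
        = ∑ i ∈ S, ∑ j ∈ Sᶜ, ∑ k : Fin n, (u i * A i k) * (B k j * v j) := by
      refine sum_congr rfl fun i _ => sum_congr rfl fun j _ => ?_
      rw [Matrix.mul_apply, Finset.mul_sum, Finset.sum_mul]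
      exact sum_congr rfl fun k _ => by ring
    rw [step1]
    have swap1 : ∑ i ∈ S, ∑ j ∈ Sᶜ, ∑ k : Fin n, (u i * A i k) * (B k j * v j)
        = ∑ i ∈ S, ∑ k : Fin n, ∑ j ∈ Sᶜ, (u i * A i k) * (B k j * v j) :=
      sum_congr rfl fun i _ => Finset.sum_comm
    have swap2 : ∑ i ∈ S, ∑ k : Fin n, ∑ j ∈ Sᶜ, (u i * A i k) * (B k j * v j)
        = ∑ k : Fin n, ∑ i ∈ S, ∑ j ∈ Sᶜ, (u i * A i k) * (B k j * v j) :=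
      Finset.sum_comm
    rw [swap1, swap2]
    exact sum_congr rfl fun k _ => (Finset.sum_mul_sum _ _ _ _).symm
  have hAle : ∀ k, ∑ i ∈ S, u i * A i k ≤ u k := by
    intro k
    have h1 : ∑ i ∈ S, u i * A i k ≤ ∑ i : Fin n, u i * A i k :=
      Finset.sum_le_sum_of_subset_of_nonneg (subset_univ S)
        (fun i _ _ => mul_nonneg (hu i) (hA i k))
    have h2 : ∑ i : Fin n, u i * A i k = u k := by
      have := congrFun hAu k
      simpa [Matrix.vecMul, dotProduct] using this
    linarith
  have hBle : ∀ k, ∑ j ∈ Sᶜ, B k j * v j ≤ v k := by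
    intro k
    have h1 : ∑ j ∈ Sᶜ, B k j * v j ≤ ∑ j : Fin n, B k j * v j :=
      Finset.sum_le_sum_of_subset_of_nonneg (subset_univ Sᶜ)
        (fun j _ _ => mul_nonneg (hB k j) (hv j))
    have h2 : ∑ j : Fin n, B k j * v j = v k := by
      have := congrFun hBv k
      simpa [Matrix.mulVec, dotProduct] using this
    linarith
  have hF1 : ∑ k ∈ S, F k ≤ ∑ i ∈ S, ∑ j ∈ Sᶜ, u i * B i j * v j := by
    have h1 : ∑ k ∈ S, F k ≤ ∑ k ∈ S, u k * (∑ j ∈ Sᶜ, B k j * v j) := by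
      refine sum_le_sum fun k _ => mul_le_mul_of_nonneg_right (hAle k) ?_
      exact sum_nonneg fun j _ => mul_nonneg (hB k j) (hv j)
    have h2 : ∑ k ∈ S, u k * (∑ j ∈ Sᶜ, B k j * v j) = ∑ i ∈ S, ∑ j ∈ Sᶜ, u i * B i j * v j := by
      refine sum_congr rfl fun k _ => ?_
      rw [Finset.mul_sum]
      exact sum_congr rfl fun j _ => by ring
    linarith
  have hF2 : ∑ k ∈ Sᶜ, F k ≤ ∑ i ∈ S, ∑ j ∈ Sᶜ, u i * A i j * v j := by
    have h1 : ∑ k ∈ Sᶜ, F k ≤ ∑ k ∈ Sᶜ, (∑ i ∈ S, u i * A i k) * v k := by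
      refine sum_le_sum fun k _ => mul_le_mul_of_nonneg_left (hBle k) ?_
      exact sum_nonneg fun i _ => mul_nonneg (hu i) (hA i k)
    have h2 : ∑ k ∈ Sᶜ, (∑ i ∈ S, u i * A i k) * v k
        = ∑ i ∈ S, ∑ k ∈ Sᶜ, u i * A i k * v k := by
      have h3 : ∀ k, (∑ i ∈ S, u i * A i k) * v k = ∑ i ∈ S, u i * A i k * v k := fun k =>
        Finset.sum_mul _ _ _
      simp_rw [h3]
      exact Finset.sum_comm
    linarith
  have := Finset.sum_add_sum_compl S F
  linarith [hsplit, hF1, hF2, this]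

theorem stmt_11 {n : ℕ} (R : Matrix (Fin n) (Fin n) ℝ)
    (hR : ∀ i j, 0 ≤ R i j)
    (hirr : ∀ s t : Fin n, ∃ k : ℕ, 0 < k ∧ 0 < (R ^ k) s t)
    (u v : Fin n → ℝ) (hu : ∀ i, 0 < u i) (hv : ∀ i, 0 < v i)
    (huR : R.vecMul u = u) (hRv : R.mulVec v = v)
    (huv : ∑ i, u i * v i = 1) :
    -- (a)
    (∀ i j, 0 ≤ matExp (R - 1) i j) ∧
    (∀ s t : Fin n, ∃ k : ℕ, 0 < k ∧ 0 < ((matExp (R - 1)) ^ k) s t) ∧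
    (matExp (R - 1)).mulVec v = v ∧
    (matExp (R - 1)).vecMul u = u ∧
    (∀ μ : ℂ, (((matExp (R - 1)).map (algebraMap ℝ ℂ)).charpoly).IsRoot μ →
      ‖μ‖ ≤ 1) ∧
    -- (b)
    (∀ t : ℝ, 0 ≤ t → ∀ S : Finset (Fin n),
      ePhiS u v (matExp (t • (R - 1))) S ≤ t * ePhiS u v R S) := by
  -- nonnegativity of powers
  have hpow_nonneg : ∀ (p : ℕ) (i j : Fin n), 0 ≤ (R ^ p) i j := by
    intro p
    induction p with
    | zero => intro i j; by_cases h : i = j <;> simp [h, Matrix.one_apply]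
    | succ p ih =>
      intro i j
      rw [pow_succ, Matrix.mul_apply]
      exact sum_nonneg fun k _ => mul_nonneg (ih i k) (hR k j)
  have hpowv : ∀ p : ℕ, (R ^ p).mulVec v = v := by
    intro p
    induction p with
    | zero => simp
    | succ p ih => rw [pow_succ, ← Matrix.mulVec_mulVec, hRv, ih]
  have hpowu : ∀ p : ℕ, (R ^ p).vecMul u = u := by
    intro p
    induction p with
    | zero => simp
    | succ p ih => rw [pow_succ, ← Matrix.vecMul_vecMul, ih, huR]
  -- the entrywise series for matExp (R - 1)
  have hE : ∀ i j, HasSum (fun p : ℕ => Real.exp (-1) * ((1 : ℝ) ^ p / (Nat.factorial p : ℝ))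
      * (R ^ p) i j) (matExp (R - 1) i j) := by
    intro i j
    have := matExp_smul_hasSum R 1 i j
    rwa [one_smul] at this
  have hterm_nonneg : ∀ (i j : Fin n) (p : ℕ),
      0 ≤ Real.exp (-1) * ((1 : ℝ) ^ p / (Nat.factorial p : ℝ)) * (R ^ p) i j := by
    intro i j p
    have h1 : (0:ℝ) < Nat.factorial p := by positivity
    have := hpow_nonneg p i j
    positivity
  -- (a1)
  have ha1 : ∀ i j, 0 ≤ matExp (R - 1) i j := by
    intro i j
    exact hasSum_le (fun p => hterm_nonneg i j p) hasSum_zero (hE i j)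
  -- (a2)
  have ha2 : ∀ s t : Fin n, 0 < matExp (R - 1) s t := by
    intro s t
    obtain ⟨k, hk, hkpos⟩ := hirr s t
    have hle : Real.exp (-1) * ((1 : ℝ) ^ k / (Nat.factorial k : ℝ)) * (R ^ k) s t
        ≤ matExp (R - 1) s t := le_hasSum (hE s t) k (fun p _ => hterm_nonneg s t p)
    have hfac : (0:ℝ) < Nat.factorial k := by positivity
    have h0 : 0 < Real.exp (-1) * ((1 : ℝ) ^ k / (Nat.factorial k : ℝ)) * (R ^ k) s t := by
      positivity
    linarith
  -- exp series for real numbers with coefficient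
  have hexp1 : HasSum (fun p : ℕ => Real.exp (-1) * ((1 : ℝ) ^ p / (Nat.factorial p : ℝ))) 1 := by
    have h := (hasSum_exp_real 1).mul_left (Real.exp (-1))
    have : Real.exp (-1) * Real.exp 1 = 1 := by rw [← Real.exp_add]; norm_num
    rwa [this] at h
  -- (a3)
  have ha3 : (matExp (R - 1)).mulVec v = v := by
    funext i
    have h1 : ∀ j : Fin n, HasSum (fun p : ℕ =>
        (Real.exp (-1) * ((1 : ℝ) ^ p / (Nat.factorial p : ℝ)) * (R ^ p) i j) * v j)
        (matExp (R - 1) i j * v j) := fun j => (hE i j).mul_right (v j)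
    have h2 : HasSum (fun p : ℕ => ∑ j : Fin n,
        (Real.exp (-1) * ((1 : ℝ) ^ p / (Nat.factorial p : ℝ)) * (R ^ p) i j) * v j)
        (∑ j : Fin n, matExp (R - 1) i j * v j) := hasSum_sum fun j _ => h1 j
    have h3 : HasSum (fun p : ℕ =>
        Real.exp (-1) * ((1 : ℝ) ^ p / (Nat.factorial p : ℝ)) * v i)
        (∑ j : Fin n, matExp (R - 1) i j * v j) := by
      refine h2.congr_fun fun p => ?_
      have hrow : ∑ j : Fin n, (R ^ p) i j * v j = v i := by
        have := congrFun (hpowv p) i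
        simpa [Matrix.mulVec, dotProduct] using this
      calc Real.exp (-1) * ((1 : ℝ) ^ p / (Nat.factorial p : ℝ)) * v i
          = Real.exp (-1) * ((1 : ℝ) ^ p / (Nat.factorial p : ℝ))
            * ∑ j : Fin n, (R ^ p) i j * v j := by rw [hrow]
        _ = ∑ j : Fin n, (Real.exp (-1) * ((1 : ℝ) ^ p / (Nat.factorial p : ℝ))
            * (R ^ p) i j) * v j := by
            rw [Finset.mul_sum]; exact sum_congr rfl fun j _ => by ring
    have h4 : HasSum (fun p : ℕ =>
        Real.exp (-1) * ((1 : ℝ) ^ p / (Nat.factorial p : ℝ)) * v i) (v i) := by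
      have := hexp1.mul_right (v i)
      simpa using this
    have h5 : ∑ j : Fin n, matExp (R - 1) i j * v j = v i := h3.unique h4
    show ∑ j : Fin n, matExp (R - 1) i j * v j = v i
    exact h5
  -- (a4)
  have ha4 : (matExp (R - 1)).vecMul u = u := by
    funext j
    have h1 : ∀ i : Fin n, HasSum (fun p : ℕ =>
        u i * (Real.exp (-1) * ((1 : ℝ) ^ p / (Nat.factorial p : ℝ)) * (R ^ p) i j))
        (u i * matExp (R - 1) i j) := fun i => (hE i j).mul_left (u i)
    have h2 : HasSum (fun p : ℕ => ∑ i : Fin n,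
        u i * (Real.exp (-1) * ((1 : ℝ) ^ p / (Nat.factorial p : ℝ)) * (R ^ p) i j))
        (∑ i : Fin n, u i * matExp (R - 1) i j) := hasSum_sum fun i _ => h1 i
    have h3 : HasSum (fun p : ℕ =>
        Real.exp (-1) * ((1 : ℝ) ^ p / (Nat.factorial p : ℝ)) * u j)
        (∑ i : Fin n, u i * matExp (R - 1) i j) := by
      refine h2.congr_fun fun p => ?_
      have hcol : ∑ i : Fin n, u i * (R ^ p) i j = u j := by
        have := congrFun (hpowu p) j
        simpa [Matrix.vecMul, dotProduct] using this
      calc Real.exp (-1) * ((1 : ℝ) ^ p / (Nat.factorial p : ℝ)) * u j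
          = Real.exp (-1) * ((1 : ℝ) ^ p / (Nat.factorial p : ℝ))
            * ∑ i : Fin n, u i * (R ^ p) i j := by rw [hcol]
        _ = ∑ i : Fin n, u i * (Real.exp (-1) * ((1 : ℝ) ^ p / (Nat.factorial p : ℝ))
            * (R ^ p) i j) := by
            rw [Finset.mul_sum]; exact sum_congr rfl fun i _ => by ring
    have h4 : HasSum (fun p : ℕ =>
        Real.exp (-1) * ((1 : ℝ) ^ p / (Nat.factorial p : ℝ)) * u j) (u j) := by
      have := hexp1.mul_right (u j)
      simpa using this
    show ∑ i : Fin n, u i * matExp (R - 1) i j = u j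
    exact h3.unique h4
  refine ⟨ha1, ?_, ha3, ha4, ?_, ?_⟩
  · -- (a2) conclusion
    intro s t
    exact ⟨1, one_pos, by rw [pow_one]; exact ha2 s t⟩
  · -- (a5)
    intro μ hμ
    set E := matExp (R - 1) with hEdef
    set Ec := E.map (algebraMap ℝ ℂ) with hEc
    have hdet : (Matrix.diagonal (fun _ : Fin n => μ) - Ec).det = 0 := by
      have h1 : ((charmatrix Ec).map (Polynomial.evalRingHom μ)).det = 0 := by
        rw [← RingHom.mapMatrix_apply, ← RingHom.map_det]
        simpa [Matrix.charpoly, Polynomial.IsRoot] using hμ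
      have h2 : (charmatrix Ec).map (Polynomial.evalRingHom μ)
          = Matrix.diagonal (fun _ : Fin n => μ) - Ec := by
        ext i j
        by_cases h : i = j <;>
          simp [charmatrix_apply, h, Matrix.diagonal_apply, Matrix.map_apply]
      rwa [h2] at h1
    obtain ⟨w, hw0, hww⟩ := Matrix.exists_mulVec_eq_zero_iff.mpr hdet
    have heig : ∀ i, ∑ j : Fin n, Ec i j * w j = μ * w i := by
      intro i
      have h1 := congrFun hww i
      rw [Matrix.sub_mulVec] at h1
      have h2 : (Matrix.diagonal (fun _ : Fin n => μ) *ᵥ w) i = μ * w i :=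
        Matrix.mulVec_diagonal _ _ _
      have h3 : (Ec *ᵥ w) i = ∑ j : Fin n, Ec i j * w j := by
        simp [Matrix.mulVec, dotProduct]
      simp only [Pi.sub_apply, Pi.zero_apply] at h1
      rw [h2, h3] at h1
      linear_combination -h1
    have key : ∀ i, ‖μ‖ * ‖w i‖
        ≤ ∑ j : Fin n, E i j * ‖w j‖ := by
      intro i
      calc ‖μ‖ * ‖w i‖
          = ‖μ * w i‖ := (norm_mul _ _).symm
        _ = ‖∑ j : Fin n, Ec i j * w j‖ := by rw [heig i]
        _ ≤ ∑ j : Fin n, ‖Ec i j * w j‖ := norm_sum_le _ _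
        _ = ∑ j : Fin n, E i j * ‖w j‖ := by
            refine sum_congr rfl fun j _ => ?_
            rw [norm_mul]
            congr 1
            simp [hEc, Matrix.map_apply, abs_of_nonneg (ha1 i j)]
    have hchain : ‖μ‖ * ∑ i : Fin n, u i * ‖w i‖
        ≤ ∑ i : Fin n, u i * ‖w i‖ := by
      have s1 : ‖μ‖ * ∑ i : Fin n, u i * ‖w i‖
          = ∑ i : Fin n, u i * (‖μ‖ * ‖w i‖) := by
        rw [Finset.mul_sum]; exact sum_congr rfl fun i _ => by ring
      have s2 : ∑ i : Fin n, u i * (‖μ‖ * ‖w i‖)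
          ≤ ∑ i : Fin n, u i * ∑ j : Fin n, E i j * ‖w j‖ :=
        sum_le_sum fun i _ => mul_le_mul_of_nonneg_left (key i) (hu i).le
      have s3 : ∑ i : Fin n, u i * ∑ j : Fin n, E i j * ‖w j‖
          = ∑ j : Fin n, u j * ‖w j‖ := by
        have e1 : ∑ i : Fin n, u i * ∑ j : Fin n, E i j * ‖w j‖
            = ∑ j : Fin n, (∑ i : Fin n, u i * E i j) * ‖w j‖ := by
          simp_rw [Finset.mul_sum]
          rw [Finset.sum_comm]
          refine sum_congr rfl fun j _ => ?_
          rw [Finset.sum_mul]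
          exact sum_congr rfl fun i _ => by ring
        rw [e1]
        refine sum_congr rfl fun j _ => ?_
        congr 1
        have := congrFun ha4 j
        simpa [Matrix.vecMul, dotProduct] using this
      linarith
    have hWpos : 0 < ∑ i : Fin n, u i * ‖w i‖ := by
      obtain ⟨i0, hi0⟩ := Function.ne_iff.mp hw0
      refine Finset.sum_pos' (fun i _ => mul_nonneg (hu i).le (norm_nonneg _))
        ⟨i0, mem_univ _, ?_⟩
      refine mul_pos (hu i0) (norm_pos_iff.mpr ?_)
      simpa using hi0
    exact (mul_le_iff_le_one_left hWpos).mp hchain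
  · intro t ht S
    rcases S.eq_empty_or_nonempty with hS | hS
    · simp [ePhiS, hS]
    have hD : 0 < ∑ i ∈ S, u i * v i :=
      Finset.sum_pos (fun i _ => mul_pos (hu i) (hv i)) hS
    set NR := ∑ i ∈ S, ∑ j ∈ Sᶜ, u i * R i j * v j with hNR
    have hNpow : ∀ p : ℕ, ∑ i ∈ S, ∑ j ∈ Sᶜ, u i * (R ^ p) i j * v j ≤ (p : ℝ) * NR := by
      intro p
      induction p with
      | zero =>
        have hz : ∑ i ∈ S, ∑ j ∈ Sᶜ, u i * (R ^ 0) i j * v j = 0 := by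
          refine Finset.sum_eq_zero fun i hi => Finset.sum_eq_zero fun j hj => ?_
          have hij : i ≠ j := fun h => (Finset.mem_compl.mp hj) (h ▸ hi)
          simp [Matrix.one_apply_ne hij]
        rw [hz]; simp
      | succ p ih =>
        have hstep := numer_mul_le u v (fun i => (hu i).le) (fun i => (hv i).le) S
          (R ^ p) R (hpow_nonneg p) hR (hpowu p) hRv
        rw [← pow_succ] at hstep
        push_cast
        linarith
    have hNsum : HasSum (fun p : ℕ => Real.exp (-t) * (t ^ p / (Nat.factorial p : ℝ))
        * (∑ i ∈ S, ∑ j ∈ Sᶜ, u i * (R ^ p) i j * v j))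
        (∑ i ∈ S, ∑ j ∈ Sᶜ, u i * matExp (t • (R - 1)) i j * v j) := by
      have h1 : HasSum (fun p : ℕ => ∑ i ∈ S, ∑ j ∈ Sᶜ,
          u i * (Real.exp (-t) * (t ^ p / (Nat.factorial p : ℝ)) * (R ^ p) i j) * v j)
          (∑ i ∈ S, ∑ j ∈ Sᶜ, u i * matExp (t • (R - 1)) i j * v j) :=
        hasSum_sum fun i _ => hasSum_sum fun j _ =>
          ((matExp_smul_hasSum R t i j).mul_left (u i)).mul_right (v j)
      refine h1.congr_fun fun p => ?_
      rw [Finset.mul_sum]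
      refine sum_congr rfl fun i _ => ?_
      rw [Finset.mul_sum]
      exact sum_congr rfl fun j _ => by ring
    have hBsum : HasSum (fun p : ℕ => Real.exp (-t) * (t ^ p / (Nat.factorial p : ℝ))
        * ((p : ℝ) * NR)) (t * NR) := by
      have h0 := ((hasSum_mul_exp_real t).mul_left (Real.exp (-t))).mul_right NR
      have hee : Real.exp (-t) * Real.exp t = 1 := by rw [← Real.exp_add]; simp
      have hval : Real.exp (-t) * (t * Real.exp t) * NR = t * NR := by
        linear_combination t * NR * hee
      rw [hval] at h0
      refine h0.congr_fun fun p => by ring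
    have hle : ∑ i ∈ S, ∑ j ∈ Sᶜ, u i * matExp (t • (R - 1)) i j * v j ≤ t * NR := by
      refine hasSum_le (fun p => ?_) hNsum hBsum
      have hcoef : 0 ≤ Real.exp (-t) * (t ^ p / (Nat.factorial p : ℝ)) := by
        have h1 : (0:ℝ) < Nat.factorial p := by positivity
        positivity
      exact mul_le_mul_of_nonneg_left (hNpow p) hcoef
    rw [ePhiS, ePhiS, ← mul_div_assoc]
    gcongr
end

section
/- Let A be the de Bruijn matrix on n = 2^k vertices. Then 1/(2 log₂ n) ≤ φ(A) ≤ 8/log₂ n. -/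
open Matrix Finset

/-- The edge expansion of a doubly stochastic matrix over an arbitrary finite vertex set. -/
noncomputable def phiDS {V : Type*} [Fintype V] [DecidableEq V]
    (A : Matrix V V ℝ) : ℝ :=
  sInf {x : ℝ | ∃ S : Finset V, S.Nonempty ∧ 2 * S.card ≤ Fintype.card V ∧
    x = (∑ i ∈ S, ∑ j ∈ Sᶜ, A i j) / (S.card : ℝ)}

lemma card_pattern (k : ℕ) (T : Finset (Fin k)) (g : Fin k → Bool) :
    (univ.filter fun x : Fin k → Bool => ∀ i ∈ T, x i = g i).card = 2 ^ (k - T.card) := by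
  classical
  have h1 : (univ.filter fun x : Fin k → Bool => ∀ i ∈ T, x i = g i)
      = Fintype.piFinset (fun i => if i ∈ T then {g i} else Finset.univ) := by
    ext x
    simp only [mem_filter, mem_univ, true_and, Fintype.mem_piFinset]
    constructor
    · intro h i; by_cases hi : i ∈ T <;> simp [hi, h i]
    · intro h i hi; have := h i; simp [hi] at this; exact this
  rw [h1, Fintype.card_piFinset]
  rw [← Finset.prod_mul_prod_compl T]
  have hc : Finset.card Tᶜ = k - T.card := by
    rw [Finset.card_compl, Fintype.card_fin]
  rw [Finset.prod_congr rfl (fun i hi => by simp [hi] : ∀ i ∈ T, ((if i ∈ T then ({g i} : Finset Bool) else univ)).card = 1),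
      Finset.prod_congr rfl (fun i hi => by simp [mem_compl.mp hi] : ∀ i ∈ Tᶜ, ((if i ∈ T then ({g i} : Finset Bool) else univ)).card = 2)]
  simp [hc]

lemma cut_mul_le {V : Type*} [Fintype V] [DecidableEq V] (M N : Matrix V V ℝ)
    (hM0 : ∀ i j, 0 ≤ M i j) (hN0 : ∀ i j, 0 ≤ N i j)
    (hMcol : ∀ j, ∑ i, M i j = 1) (hNrow : ∀ i, ∑ j, N i j = 1)
    (S : Finset V) :
    ∑ i ∈ S, ∑ j ∈ Sᶜ, (M * N) i j ≤ (∑ i ∈ S, ∑ j ∈ Sᶜ, M i j) + (∑ i ∈ S, ∑ j ∈ Sᶜ, N i j) := by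
  classical
  set c : V → ℝ := fun m => ∑ j ∈ Sᶜ, N m j with hc
  have hc0 : ∀ m, 0 ≤ c m := fun m => Finset.sum_nonneg fun j _ => hN0 m j
  have hc1 : ∀ m, c m ≤ 1 := by
    intro m
    rw [← hNrow m]
    exact Finset.sum_le_sum_of_subset_of_nonneg (Finset.subset_univ _) (fun j _ _ => hN0 m j)
  have key : ∀ i, ∑ j ∈ Sᶜ, (M * N) i j = ∑ m, M i m * c m := by
    intro i
    simp only [Matrix.mul_apply]
    rw [Finset.sum_comm]
    exact Finset.sum_congr rfl fun m _ => by rw [← Finset.mul_sum]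
  calc ∑ i ∈ S, ∑ j ∈ Sᶜ, (M * N) i j
      = ∑ i ∈ S, ((∑ m ∈ S, M i m * c m) + ∑ m ∈ Sᶜ, M i m * c m) := by
        refine Finset.sum_congr rfl fun i _ => ?_
        rw [key i, ← Finset.sum_add_sum_compl S]
    _ = (∑ i ∈ S, ∑ m ∈ S, M i m * c m) + ∑ i ∈ S, ∑ m ∈ Sᶜ, M i m * c m := by
        rw [Finset.sum_add_distrib]
    _ ≤ (∑ i ∈ S, ∑ j ∈ Sᶜ, N i j) + ∑ i ∈ S, ∑ j ∈ Sᶜ, M i j := by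
        gcongr ?_ + ?_
        · calc ∑ i ∈ S, ∑ m ∈ S, M i m * c m = ∑ m ∈ S, (∑ i ∈ S, M i m) * c m := by
                rw [Finset.sum_comm]
                exact Finset.sum_congr rfl fun m _ => by rw [← Finset.sum_mul]
            _ ≤ ∑ m ∈ S, 1 * c m := by
                refine Finset.sum_le_sum fun m _ => ?_
                refine mul_le_mul_of_nonneg_right ?_ (hc0 m)
                rw [← hMcol m]
                exact Finset.sum_le_sum_of_subset_of_nonneg (Finset.subset_univ _) (fun i _ _ => hM0 i m)
            _ = ∑ m ∈ S, ∑ j ∈ Sᶜ, N m j := by simp [hc]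
        · refine Finset.sum_le_sum fun i _ => ?_
          refine Finset.sum_le_sum fun m _ => ?_
          calc M i m * c m ≤ M i m * 1 := mul_le_mul_of_nonneg_left (hc1 m) (hM0 i m)
            _ = M i m := mul_one _
    _ = _ := by ring

lemma pow_nonneg' {V : Type*} [Fintype V] [DecidableEq V] (M : Matrix V V ℝ)
    (hM0 : ∀ i j, 0 ≤ M i j) : ∀ n, ∀ i j, 0 ≤ (M ^ n) i j := by
  intro n
  induction n with
  | zero => intro i j; simp [Matrix.one_apply]; split <;> norm_num
  | succ n ih =>
    intro i j
    rw [pow_succ, Matrix.mul_apply]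
    exact Finset.sum_nonneg fun m _ => mul_nonneg (ih i m) (hM0 m j)

lemma pow_col {V : Type*} [Fintype V] [DecidableEq V] (M : Matrix V V ℝ)
    (hMcol : ∀ j, ∑ i, M i j = 1) : ∀ n, ∀ j, ∑ i, (M ^ n) i j = 1 := by
  intro n
  induction n with
  | zero => intro j; simp [Matrix.one_apply]
  | succ n ih =>
    intro j
    rw [pow_succ]
    simp only [Matrix.mul_apply]
    rw [Finset.sum_comm]
    calc ∑ m, ∑ i, (M ^ n) i m * M m j = ∑ m, (∑ i, (M ^ n) i m) * M m j := by
          exact Finset.sum_congr rfl fun m _ => by rw [← Finset.sum_mul]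
      _ = ∑ m, M m j := by simp [ih]
      _ = 1 := hMcol j

lemma cut_pow_le {V : Type*} [Fintype V] [DecidableEq V] (M : Matrix V V ℝ)
    (hM0 : ∀ i j, 0 ≤ M i j) (hMcol : ∀ j, ∑ i, M i j = 1) (hMrow : ∀ i, ∑ j, M i j = 1)
    (S : Finset V) :
    ∀ n : ℕ, ∑ i ∈ S, ∑ j ∈ Sᶜ, (M ^ n) i j ≤ (n : ℝ) * ∑ i ∈ S, ∑ j ∈ Sᶜ, M i j := by
  intro n
  induction n with
  | zero =>
    simp only [pow_zero, Nat.cast_zero, zero_mul]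
    have : ∀ i ∈ S, ∑ j ∈ Sᶜ, (1 : Matrix V V ℝ) i j = 0 := by
      intro i hi
      refine Finset.sum_eq_zero fun j hj => ?_
      have : i ≠ j := fun h => (Finset.mem_compl.mp hj) (h ▸ hi)
      simp [Matrix.one_apply, this]
    rw [Finset.sum_congr rfl this]
    simp
  | succ n ih =>
    rw [pow_succ]
    calc ∑ i ∈ S, ∑ j ∈ Sᶜ, (M ^ n * M) i j
        ≤ (∑ i ∈ S, ∑ j ∈ Sᶜ, (M ^ n) i j) + ∑ i ∈ S, ∑ j ∈ Sᶜ, M i j :=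
          cut_mul_le (M ^ n) M (pow_nonneg' M hM0 n) hM0 (pow_col M hMcol n) hMrow S
      _ ≤ n * (∑ i ∈ S, ∑ j ∈ Sᶜ, M i j) + ∑ i ∈ S, ∑ j ∈ Sᶜ, M i j := by
          gcongr
      _ = (n + 1 : ℕ) * ∑ i ∈ S, ∑ j ∈ Sᶜ, M i j := by push_cast; ring


section DB
variable (k : ℕ) (hk : 0 < k) (A : Matrix (Fin k → Bool) (Fin k → Bool) ℝ)
  (hAdef : ∀ x y : Fin k → Bool,
      A x y = if (∀ i j : Fin k, (i : ℕ) = (j : ℕ) + 1 → x j = y i) then (1 / 2 : ℝ) else 0)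

include hAdef

lemma hA_nonneg : ∀ x y, 0 ≤ A x y := by
  intro x y; rw [hAdef]; positivity

include hk

lemma hA_row : ∀ x, ∑ y, A x y = 1 := by
  intro x
  have hcond : ∀ y : Fin k → Bool,
      (∀ i j : Fin k, (i : ℕ) = (j : ℕ) + 1 → x j = y i) ↔
      (∀ i ∈ (univ.filter fun i : Fin k => 0 < (i:ℕ)), y i =
        (fun i : Fin k => if h : 0 < (i:ℕ) then x ⟨(i:ℕ)-1, by omega⟩ else false) i) := by
    intro y
    constructor
    · intro h i hi
      simp only [mem_filter, mem_univ, true_and] at hi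
      simp only [dif_pos hi]
      exact (h i ⟨(i:ℕ)-1, by omega⟩ (by simp; omega)).symm
    · intro h i j hij
      have hi : 0 < (i:ℕ) := by omega
      have := h i (by simp [hi])
      simp only [dif_pos hi] at this
      rw [this]
      congr 1
      exact Fin.ext (by simp; omega)
  calc ∑ y, A x y = ∑ y ∈ univ.filter (fun y : Fin k → Bool =>
        (∀ i ∈ (univ.filter fun i : Fin k => 0 < (i:ℕ)), y i =
        (fun i : Fin k => if h : 0 < (i:ℕ) then x ⟨(i:ℕ)-1, by omega⟩ else false) i)), (1/2 : ℝ) := by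
        rw [Finset.sum_filter]
        refine Finset.sum_congr rfl fun y _ => ?_
        rw [hAdef]
        by_cases h : (∀ i j : Fin k, (i : ℕ) = (j : ℕ) + 1 → x j = y i)
        · rw [if_pos h, if_pos ((hcond y).mp h)]
        · rw [if_neg h, if_neg (fun hc => h ((hcond y).mpr hc))]
    _ = 1 := by
        rw [Finset.sum_const, card_pattern]
        have : (univ.filter fun i : Fin k => 0 < (i:ℕ)).card = k - 1 := by
          have : (univ.filter fun i : Fin k => 0 < (i:ℕ)) = ({(⟨0, hk⟩ : Fin k)} : Finset (Fin k))ᶜ := by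
            ext i; simp [Fin.ext_iff]; omega
          rw [this, Finset.card_compl, Fintype.card_fin]; simp
        rw [this]
        have hk1 : k - (k - 1) = 1 := by omega
        rw [hk1]; norm_num

lemma hA_col : ∀ y, ∑ x, A x y = 1 := by
  intro y
  have hcond : ∀ x : Fin k → Bool,
      (∀ i j : Fin k, (i : ℕ) = (j : ℕ) + 1 → x j = y i) ↔
      (∀ j ∈ (univ.filter fun j : Fin k => (j:ℕ) + 1 < k), x j =
        (fun j : Fin k => if h : (j:ℕ) + 1 < k then y ⟨(j:ℕ)+1, h⟩ else false) j) := by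
    intro x
    constructor
    · intro h j hj
      simp only [mem_filter, mem_univ, true_and] at hj
      simp only [dif_pos hj]
      exact h ⟨(j:ℕ)+1, hj⟩ j (by simp)
    · intro h i j hij
      have hj : (j:ℕ) + 1 < k := by have := i.isLt; omega
      have := h j (by simp [hj])
      simp only [dif_pos hj] at this
      rw [this]
      congr 1
      exact Fin.ext (by simp; omega)
  calc ∑ x, A x y = ∑ x ∈ univ.filter (fun x : Fin k → Bool =>
        (∀ j ∈ (univ.filter fun j : Fin k => (j:ℕ) + 1 < k), x j =
        (fun j : Fin k => if h : (j:ℕ) + 1 < k then y ⟨(j:ℕ)+1, h⟩ else false) j)), (1/2 : ℝ) := by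
        rw [Finset.sum_filter]
        refine Finset.sum_congr rfl fun x _ => ?_
        rw [hAdef]
        by_cases h : (∀ i j : Fin k, (i : ℕ) = (j : ℕ) + 1 → x j = y i)
        · rw [if_pos h, if_pos ((hcond x).mp h)]
        · rw [if_neg h, if_neg (fun hc => h ((hcond x).mpr hc))]
    _ = 1 := by
        rw [Finset.sum_const, card_pattern]
        have : (univ.filter fun j : Fin k => (j:ℕ) + 1 < k).card = k - 1 := by
          have : (univ.filter fun j : Fin k => (j:ℕ) + 1 < k) = ({(⟨k-1, by omega⟩ : Fin k)} : Finset (Fin k))ᶜ := by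
            ext j; simp [Fin.ext_iff]; omega
          rw [this, Finset.card_compl, Fintype.card_fin]; simp
        rw [this]
        have hk1 : k - (k - 1) = 1 := by omega
        rw [hk1]; norm_num

end DB

section DB
variable {k : ℕ} (A : Matrix (Fin k → Bool) (Fin k → Bool) ℝ)
  (hAdef : ∀ x y : Fin k → Bool,
      A x y = if (∀ i j : Fin k, (i : ℕ) = (j : ℕ) + 1 → x j = y i) then (1 / 2 : ℝ) else 0)

include hAdef

lemma pow_entry_ge :
    ∀ m : ℕ, ∀ x y : Fin k → Bool,
      (∀ i j : Fin k, (i : ℕ) = (j : ℕ) + m → x j = y i) →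
      (1/2 : ℝ) ^ m ≤ (A ^ m) x y := by
  have hA0 : ∀ x y, 0 ≤ A x y := by intro x y; rw [hAdef]; positivity
  intro m
  induction m with
  | zero =>
    intro x y h
    have hxy : x = y := by
      funext i
      exact h i i (by simp)
    simp [hxy, Matrix.one_apply]
  | succ m ih =>
    intro x y h
    rw [pow_succ' A m, Matrix.mul_apply]
    set z₀ : Fin k → Bool := fun j =>
      if h1 : 0 < (j : ℕ) then x ⟨(j : ℕ) - 1, by omega⟩
      else if h2 : (j : ℕ) + m < k then y ⟨(j : ℕ) + m, h2⟩ else false with hz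
    have hAxz : A x z₀ = 1/2 := by
      rw [hAdef]
      refine if_pos ?_
      intro i j hij
      have hi : 0 < (i : ℕ) := by omega
      simp only [hz, dif_pos hi]
      congr 1
      exact Fin.ext (by simp; omega)
    have hz₀y : (∀ i j : Fin k, (i : ℕ) = (j : ℕ) + m → z₀ j = y i) := by
      intro i j hij
      by_cases hj : 0 < (j : ℕ)
      · simp only [hz, dif_pos hj]
        exact h i ⟨(j : ℕ) - 1, by omega⟩ (by simp; omega)
      · have hj0 : (j : ℕ) = 0 := by omega
        have hmk : (0 : ℕ) + m < k := by have := i.isLt; omega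
        simp only [hz, dif_neg hj, hj0]
        rw [dif_pos hmk]
        congr 1
        exact Fin.ext (by simp; omega)
    calc (1/2 : ℝ) ^ (m + 1) = (1/2) * (1/2) ^ m := by ring
      _ ≤ A x z₀ * (A ^ m) z₀ y := by
          rw [hAxz]
          exact mul_le_mul_of_nonneg_left (ih z₀ y hz₀y) (by norm_num)
      _ ≤ ∑ z, A x z * (A ^ m) z y := by
          refine Finset.single_le_sum (f := fun z => A x z * (A ^ m) z y) (fun z _ => ?_) (Finset.mem_univ z₀)
          exact mul_nonneg (hA0 x z) (pow_nonneg' A hA0 m z y)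
end DB


lemma aux_two_pow (t : ℕ) (ht : 2 ≤ t) : t + 2 ≤ 2 ^ t := by
  induction t with
  | zero => omega
  | succ n ih =>
    rcases Nat.lt_or_ge n 2 with h | h
    · interval_cases n <;> simp_all
    · have h1 := ih h
      have h2 : 1 ≤ 2 ^ n := Nat.one_le_two_pow
      rw [pow_succ]
      omega

lemma upper_run (k : ℕ) (hk9 : 9 ≤ k) (A : Matrix (Fin k → Bool) (Fin k → Bool) ℝ)
    (hAdef : ∀ x y : Fin k → Bool,
      A x y = if (∀ i j : Fin k, (i : ℕ) = (j : ℕ) + 1 → x j = y i) then (1 / 2 : ℝ) else 0)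
    (hArow : ∀ x, ∑ y, A x y = 1) :
    ∃ S : Finset (Fin k → Bool), S.Nonempty ∧ 2 * S.card ≤ Fintype.card (Fin k → Bool) ∧
      (∑ i ∈ S, ∑ j ∈ Sᶜ, A i j) / (S.card : ℝ) ≤ 8 / (k : ℝ) := by
  have hA0 : ∀ x y, 0 ≤ A x y := by intro x y; rw [hAdef]; positivity
  set m : ℕ := (k + 1) / 2 with hm
  set a : ℕ := k - m with ha
  have hm5 : 5 ≤ m := by omega
  have ha4 : 4 ≤ a := by omega
  have ham : a ≤ m := by omega
  have hamk : a + m = k := by omega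
  set S : Finset (Fin k → Bool) := univ.filter (fun x : Fin k → Bool =>
      ∃ p : Fin k, (p : ℕ) + m ≤ k ∧
        ∀ j : Fin k, (p : ℕ) ≤ (j : ℕ) → (j : ℕ) < (p : ℕ) + m → x j = true) with hS
  -- membership characterization
  have hSmem : ∀ x : Fin k → Bool, x ∈ S ↔
      ∃ p : Fin k, (p : ℕ) + m ≤ k ∧
        ∀ j : Fin k, (p : ℕ) ≤ (j : ℕ) → (j : ℕ) < (p : ℕ) + m → x j = true := by
    intro x; rw [hS]; simp
  -- nonempty
  have hSne : S.Nonempty := by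
    refine ⟨fun _ => true, (hSmem _).mpr ⟨⟨0, by omega⟩, by simp only [Fin.val_mk]; omega, fun j _ _ => rfl⟩⟩
  -- upper bound on card
  set R : ℕ → Finset (Fin k → Bool) := fun p => univ.filter (fun x : Fin k → Bool =>
      ∀ i : Fin k, p ≤ (i : ℕ) → (i : ℕ) < p + m → x i = true) with hR
  have hRcard : ∀ p : ℕ, p + m ≤ k → (R p).card = 2 ^ a := by
    intro p hp
    have hlt : ∀ v ∈ Finset.Ico p (p + m), v < k := by
      intro v hv; rw [Finset.mem_Ico] at hv; omega
    have : R p = univ.filter (fun x : Fin k → Bool =>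
        ∀ i ∈ Finset.attachFin (Finset.Ico p (p + m)) hlt, x i = (fun _ => true) i) := by
      rw [hR]
      ext x
      simp only [mem_filter, mem_univ, true_and, Finset.mem_attachFin, Finset.mem_Ico]
      constructor
      · intro h i hi; exact h i hi.1 hi.2
      · intro h i h1 h2; exact h i ⟨h1, h2⟩
    rw [this, card_pattern, Finset.card_attachFin, Nat.card_Ico]
    congr 1 <;> omega
  have hScard_up : S.card ≤ (a + 1) * 2 ^ a := by
    have hsub : S ⊆ (Finset.range (a + 1)).biUnion R := by
      intro x hx
      obtain ⟨p, hpm, hrun⟩ := (hSmem x).mp hx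
      refine Finset.mem_biUnion.mpr ⟨(p : ℕ), Finset.mem_range.mpr (by omega), ?_⟩
      rw [hR]
      simp only [mem_filter, mem_univ, true_and]
      intro i h1 h2
      exact hrun i h1 h2
    calc S.card ≤ ((Finset.range (a + 1)).biUnion R).card := Finset.card_le_card hsub
      _ ≤ ∑ p ∈ Finset.range (a + 1), (R p).card := Finset.card_biUnion_le
      _ = ∑ p ∈ Finset.range (a + 1), 2 ^ a := by
          refine Finset.sum_congr rfl fun p hp => ?_
          exact hRcard p (by rw [Finset.mem_range] at hp; omega)
      _ = (a + 1) * 2 ^ a := by rw [Finset.sum_const, Finset.card_range, smul_eq_mul]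
  have h2S : 2 * S.card ≤ Fintype.card (Fin k → Bool) := by
    have hcard : Fintype.card (Fin k → Bool) = 2 ^ k := by simp
    have haux : m + 1 ≤ 2 ^ (m - 1) := by
      have := aux_two_pow (m - 1) (by omega)
      omega
    have h2m : 2 * (a + 1) ≤ 2 ^ m := by
      have hps : 2 ^ m = 2 * 2 ^ (m - 1) := by
        rw [← pow_succ']
        congr 1 <;> omega
      omega
    calc 2 * S.card ≤ 2 * ((a + 1) * 2 ^ a) := by omega
      _ = (2 * (a + 1)) * 2 ^ a := by ring
      _ ≤ 2 ^ m * 2 ^ a := Nat.mul_le_mul_right _ h2m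
      _ = 2 ^ k := by rw [← pow_add]; congr 1 <;> omega
      _ = Fintype.card (Fin k → Bool) := hcard.symm
  -- lower bound on card
  set B : ℕ → Finset (Fin k → Bool) := fun p => univ.filter (fun x : Fin k → Bool =>
      ∀ i : Fin k, p - 1 ≤ (i : ℕ) → (i : ℕ) ≤ p + m →
        x i = decide ((p ≤ (i : ℕ)) ∧ (i : ℕ) < p + m)) with hB
  have hBcard : ∀ p : ℕ, 1 ≤ p → p + m + 1 ≤ k → (B p).card = 2 ^ (a - 2) := by
    intro p hp1 hpk
    have hlt : ∀ v ∈ Finset.Icc (p - 1) (p + m), v < k := by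
      intro v hv; rw [Finset.mem_Icc] at hv; omega
    have : B p = univ.filter (fun x : Fin k → Bool =>
        ∀ i ∈ Finset.attachFin (Finset.Icc (p - 1) (p + m)) hlt,
          x i = (fun i : Fin k => decide ((p ≤ (i : ℕ)) ∧ (i : ℕ) < p + m)) i) := by
      rw [hB]
      ext x
      simp only [mem_filter, mem_univ, true_and, Finset.mem_attachFin, Finset.mem_Icc]
      constructor
      · intro h i hi; exact h i hi.1 hi.2
      · intro h i h1 h2; exact h i ⟨h1, h2⟩
    rw [this, card_pattern, Finset.card_attachFin, Nat.card_Icc]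
    congr 1 <;> omega
  have hBsub : ∀ p : ℕ, 1 ≤ p → p + m + 1 ≤ k → B p ⊆ S := by
    intro p hp1 hpk x hx
    rw [hB] at hx
    simp only [mem_filter, mem_univ, true_and] at hx
    refine (hSmem x).mpr ⟨⟨p, by omega⟩, by simp only [Fin.val_mk]; omega, ?_⟩
    intro j h1 h2
    simp only at h1 h2
    have := hx j (by omega) (by omega)
    rw [this]
    simp only [decide_eq_true_eq]
    constructor <;> omega
  have hBdisj : ∀ p ∈ Finset.Icc 1 (a - 1), ∀ q ∈ Finset.Icc 1 (a - 1), p ≠ q →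
      Disjoint (B p) (B q) := by
    have key : ∀ p q : ℕ, 1 ≤ p → p < q → q ≤ a - 1 → Disjoint (B p) (B q) := by
      intro p q hp1 hpq hqa
      rw [Finset.disjoint_left]
      intro x hxp hxq
      rw [hB] at hxp hxq
      simp only [mem_filter, mem_univ, true_and] at hxp hxq
      have hi : q - 1 < k := by omega
      have h1 := hxp ⟨q - 1, hi⟩ (by simp only [Fin.val_mk]; omega) (by simp only [Fin.val_mk]; omega)
      have h2 := hxq ⟨q - 1, hi⟩ (by simp only [Fin.val_mk]; omega) (by simp only [Fin.val_mk]; omega)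
      simp only at h1 h2
      rw [h1] at h2
      have e1 : ((p ≤ q - 1) ∧ (q - 1 < p + m)) := by constructor <;> omega
      have e2 : ¬ ((q ≤ q - 1) ∧ (q - 1 < q + m)) := by omega
      simp [e1, e2] at h2
    intro p hp q hq hpq
    rw [Finset.mem_Icc] at hp hq
    rcases Nat.lt_or_ge p q with h | h
    · exact key p q hp.1 h hq.2
    · exact (key q p hq.1 (by omega) hp.2).symm
  have hScard_lo : (a - 1) * 2 ^ (a - 2) ≤ S.card := by
    have hsub : (Finset.Icc 1 (a - 1)).biUnion B ⊆ S := by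
      intro x hx
      obtain ⟨p, hp, hxp⟩ := Finset.mem_biUnion.mp hx
      rw [Finset.mem_Icc] at hp
      exact hBsub p hp.1 (by omega) hxp
    calc (a - 1) * 2 ^ (a - 2) = ∑ p ∈ Finset.Icc 1 (a - 1), 2 ^ (a - 2) := by
          rw [Finset.sum_const, Nat.card_Icc, smul_eq_mul]
          congr 1 <;> omega
      _ = ∑ p ∈ Finset.Icc 1 (a - 1), (B p).card := by
          refine Finset.sum_congr rfl fun p hp => ?_
          rw [Finset.mem_Icc] at hp
          exact (hBcard p hp.1 (by omega)).symm
      _ = ((Finset.Icc 1 (a - 1)).biUnion B).card := (Finset.card_biUnion hBdisj).symm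
      _ ≤ S.card := Finset.card_le_card hsub
  -- the crossing set X
  set X : Finset (Fin k → Bool) := univ.filter (fun x : Fin k → Bool =>
      ∀ i : Fin k, a - 1 ≤ (i : ℕ) → x i = decide (a ≤ (i : ℕ))) with hX
  have hXcard : X.card = 2 ^ (a - 1) := by
    have hlt : ∀ v ∈ Finset.Icc (a - 1) (k - 1), v < k := by
      intro v hv; rw [Finset.mem_Icc] at hv; omega
    have : X = univ.filter (fun x : Fin k → Bool =>
        ∀ i ∈ Finset.attachFin (Finset.Icc (a - 1) (k - 1)) hlt,
          x i = (fun i : Fin k => decide (a ≤ (i : ℕ))) i) := by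
      rw [hX]
      ext x
      simp only [mem_filter, mem_univ, true_and, Finset.mem_attachFin, Finset.mem_Icc]
      constructor
      · intro h i hi; exact h i hi.1
      · intro h i h1; exact h i ⟨h1, by have := i.isLt; omega⟩
    rw [this, card_pattern, Finset.card_attachFin, Nat.card_Icc]
    congr 1 <;> omega
  -- key: non-crossing rows contribute zero
  have hkey : ∀ x, x ∈ S → x ∉ X → ∀ y, y ∈ Sᶜ → A x y = 0 := by
    intro x hxS hxX
    -- find a run not touching the right end
    have hrun' : ∃ p' : ℕ, p' + m + 1 ≤ k ∧
        ∀ j : Fin k, p' ≤ (j : ℕ) → (j : ℕ) < p' + m → x j = true := by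
      obtain ⟨p, hpm, hrun⟩ := (hSmem x).mp hxS
      rcases Nat.lt_or_ge ((p : ℕ) + m) k with h | h
      · exact ⟨(p : ℕ), by omega, hrun⟩
      · -- p = a; use x ∉ X to get x (a-1) = true
        have hpa : (p : ℕ) = a := by omega
        rw [hX] at hxX
        simp only [mem_filter, mem_univ, true_and, not_forall] at hxX
        obtain ⟨i, hi1, hi2⟩ := hxX
        have hia : (i : ℕ) = a - 1 := by
          by_contra hne
          have hai : a ≤ (i : ℕ) := by omega
          have : x i = true := hrun i (by omega) (by have := i.isLt; omega)
          rw [this] at hi2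
          simp [hai] at hi2
        have hxi : x i = true := by
          by_contra hxf
          have : x i = false := by simpa using hxf
          rw [this] at hi2
          have : ¬ a ≤ (i : ℕ) := by omega
          simp [this] at hi2
        refine ⟨a - 1, by omega, ?_⟩
        intro j h1 h2
        rcases Nat.lt_or_ge ((j : ℕ)) a with hj | hj
        · have : (j : ℕ) = a - 1 := by omega
          have hij : j = i := Fin.ext (by omega)
          rw [hij]; exact hxi
        · exact hrun j (by omega) (by omega)
    obtain ⟨p', hp'k, hrun'⟩ := hrun'
    intro y hy
    rw [hAdef]
    split
    · -- then y ∈ S, contradiction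
      next hcond =>
      exfalso
      refine (Finset.mem_compl.mp hy) ((hSmem y).mpr ⟨⟨p' + 1, by omega⟩, by simp only [Fin.val_mk]; omega, ?_⟩)
      intro j h1 h2
      simp only at h1 h2
      have hj1 : (j : ℕ) - 1 < k := by omega
      have := hcond j ⟨(j : ℕ) - 1, hj1⟩ (by simp only [Fin.val_mk]; omega)
      rw [← this]
      exact hrun' _ (by simp only [Fin.val_mk]; omega) (by simp only [Fin.val_mk]; omega)
    · rfl
  -- bound the cut
  have hcut : ∑ i ∈ S, ∑ j ∈ Sᶜ, A i j ≤ (2 : ℝ) ^ (a - 1) := by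
    have h1 : ∑ i ∈ S, ∑ j ∈ Sᶜ, A i j = ∑ i ∈ S ∩ X, ∑ j ∈ Sᶜ, A i j := by
      refine (Finset.sum_subset (Finset.inter_subset_left) ?_).symm
      intro x hxS hxSX
      have hxX : x ∉ X := fun h => hxSX (Finset.mem_inter.mpr ⟨hxS, h⟩)
      exact Finset.sum_eq_zero fun y hy => hkey x hxS hxX y hy
    rw [h1]
    calc ∑ i ∈ S ∩ X, ∑ j ∈ Sᶜ, A i j ≤ ∑ i ∈ S ∩ X, (1 : ℝ) := by
          refine Finset.sum_le_sum fun i _ => ?_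
          rw [← hArow i]
          exact Finset.sum_le_sum_of_subset_of_nonneg (Finset.subset_univ _)
            (fun j _ _ => hA0 i j)
      _ = ((S ∩ X).card : ℝ) := by rw [Finset.sum_const]; simp
      _ ≤ (X.card : ℝ) := by
          exact_mod_cast Finset.card_le_card (Finset.inter_subset_right)
      _ = (2 : ℝ) ^ (a - 1) := by rw [hXcard]; push_cast; ring
  -- conclude
  refine ⟨S, hSne, h2S, ?_⟩
  have hSpos : (0 : ℝ) < (S.card : ℝ) := by
    exact_mod_cast Finset.card_pos.mpr hSne
  have hkpos : (0 : ℝ) < (k : ℝ) := by positivity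
  rw [div_le_div_iff₀ hSpos hkpos]
  have hnat : k * 2 ^ (a - 1) ≤ 8 * ((a - 1) * 2 ^ (a - 2)) := by
    have hk4a : k ≤ 4 * (a - 1) := by omega
    have hps : 2 ^ (a - 1) = 2 * 2 ^ (a - 2) := by
      rw [← pow_succ']
      congr 1 <;> omega
    calc k * 2 ^ (a - 1) = (2 * k) * 2 ^ (a - 2) := by rw [hps]; ring
      _ ≤ (8 * (a - 1)) * 2 ^ (a - 2) := Nat.mul_le_mul_right _ (by omega)
      _ = 8 * ((a - 1) * 2 ^ (a - 2)) := by ring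
  have hSR : (((a - 1) * 2 ^ (a - 2) : ℕ) : ℝ) ≤ (S.card : ℝ) := by
    exact_mod_cast hScard_lo
  calc (∑ i ∈ S, ∑ j ∈ Sᶜ, A i j) * (k : ℝ) ≤ (2 : ℝ) ^ (a - 1) * (k : ℝ) := by
        exact mul_le_mul_of_nonneg_right hcut (le_of_lt hkpos)
    _ = ((k * 2 ^ (a - 1) : ℕ) : ℝ) := by push_cast; ring
    _ ≤ ((8 * ((a - 1) * 2 ^ (a - 2)) : ℕ) : ℝ) := by exact_mod_cast hnat
    _ = 8 * (((a - 1) * 2 ^ (a - 2) : ℕ) : ℝ) := by push_cast; ring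
    _ ≤ 8 * (S.card : ℝ) := mul_le_mul_of_nonneg_left hSR (by norm_num)

/-- edge expansion of the de Bruijn matrix on `n = 2^k` vertices is `Θ(1/log₂ n)`. -/
theorem stmt_15 (k : ℕ) (hk : 0 < k)
    (A : Matrix (Fin k → Bool) (Fin k → Bool) ℝ)
    (hAdef : ∀ x y : Fin k → Bool,
      A x y = if (∀ i j : Fin k, (i : ℕ) = (j : ℕ) + 1 → x j = y i) then (1 / 2 : ℝ) else 0) :
    1 / (2 * (k : ℝ)) ≤ phiDS A ∧ phiDS A ≤ 8 / (k : ℝ) := by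
  classical
  have hA0 : ∀ x y, 0 ≤ A x y := by intro x y; rw [hAdef]; positivity
  have hrow := hA_row k hk A hAdef
  have hcol := hA_col k hk A hAdef
  have hkR : (0 : ℝ) < (k : ℝ) := by exact_mod_cast hk
  have hcardV : Fintype.card (Fin k → Bool) = 2 ^ k := by simp
  set Φ : Set ℝ := {x : ℝ | ∃ S : Finset (Fin k → Bool), S.Nonempty ∧
      2 * S.card ≤ Fintype.card (Fin k → Bool) ∧
      x = (∑ i ∈ S, ∑ j ∈ Sᶜ, A i j) / (S.card : ℝ)} with hΦ
  have hphi : phiDS A = sInf Φ := rfl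
  -- every element of Φ is at least 1/(2k)
  have hlow : ∀ x ∈ Φ, 1 / (2 * (k : ℝ)) ≤ x := by
    rintro x ⟨S, hSne, hScard, rfl⟩
    have hSpos : (0 : ℝ) < (S.card : ℝ) := by
      exact_mod_cast Finset.card_pos.mpr hSne
    -- entrywise lower bound for A^k
    have hAk : ∀ i j : Fin k → Bool, (1 / 2 : ℝ) ^ k ≤ (A ^ k) i j := by
      intro i j
      refine pow_entry_ge A hAdef k i j ?_
      intro i' j' h
      exact absurd h (by have := i'.isLt; omega)
    have hcompl : 2 ^ (k - 1) ≤ (Sᶜ).card := by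
      have h1 : (Sᶜ).card = 2 ^ k - S.card := by
        rw [Finset.card_compl, hcardV]
      have h0 : 2 * S.card ≤ 2 ^ k := by rw [← hcardV]; exact hScard
      have h2 : 2 ^ k = 2 * 2 ^ (k - 1) := by
        rw [← pow_succ']; congr 1; omega
      omega
    have hid : (2 : ℝ) ^ (k - 1) * (1 / 2 : ℝ) ^ k = 1 / 2 := by
      have hgen : ∀ t : ℕ, (2 : ℝ) ^ t * (1 / 2 : ℝ) ^ (t + 1) = 1 / 2 := by
        intro t
        rw [pow_succ, ← mul_assoc, ← mul_pow]
        norm_num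
      have hk1 : k - 1 + 1 = k := by omega
      have := hgen (k - 1)
      rwa [hk1] at this
    have h1 : (S.card : ℝ) * (1 / 2)
        ≤ ∑ i ∈ S, ∑ j ∈ Sᶜ, (A ^ k) i j := by
      calc (S.card : ℝ) * (1 / 2)
          = (S.card : ℝ) * ((2 : ℝ) ^ (k - 1) * (1 / 2 : ℝ) ^ k) := by rw [hid]
        _ ≤ (S.card : ℝ) * (((Sᶜ).card : ℝ) * (1 / 2 : ℝ) ^ k) := by
            have hc : (2 : ℝ) ^ (k - 1) ≤ ((Sᶜ).card : ℝ) := by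
              exact_mod_cast hcompl
            have hp : (0 : ℝ) ≤ (1 / 2 : ℝ) ^ k := by positivity
            have := mul_le_mul_of_nonneg_right hc hp
            exact mul_le_mul_of_nonneg_left this (by positivity)
        _ = ∑ i ∈ S, ∑ j ∈ Sᶜ, (1 / 2 : ℝ) ^ k := by
            rw [Finset.sum_const, Finset.sum_const]
            simp [mul_assoc]
        _ ≤ ∑ i ∈ S, ∑ j ∈ Sᶜ, (A ^ k) i j := by
            refine Finset.sum_le_sum fun i _ => ?_
            exact Finset.sum_le_sum fun j _ => hAk i j
    have h2 : ∑ i ∈ S, ∑ j ∈ Sᶜ, (A ^ k) i j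
        ≤ (k : ℝ) * ∑ i ∈ S, ∑ j ∈ Sᶜ, A i j :=
      cut_pow_le A hA0 hcol hrow S k
    have h3 : (S.card : ℝ) * (1 / 2) ≤ (k : ℝ) * ∑ i ∈ S, ∑ j ∈ Sᶜ, A i j :=
      le_trans h1 h2
    rw [div_le_div_iff₀ (by positivity) hSpos]
    nlinarith
  -- Φ is nonempty and bounded below
  have hbdd : BddBelow Φ := by
    refine ⟨0, fun x hx => ?_⟩
    obtain ⟨S, hS1, hS2, rfl⟩ := hx
    have : (0 : ℝ) ≤ ∑ i ∈ S, ∑ j ∈ Sᶜ, A i j :=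
      Finset.sum_nonneg fun i _ => Finset.sum_nonneg fun j _ => hA0 i j
    positivity
  have hsingle : ∀ z : Fin k → Bool, ((∑ i ∈ ({z} : Finset (Fin k → Bool)),
      ∑ j ∈ ({z} : Finset (Fin k → Bool))ᶜ, A i j) / (({z} : Finset (Fin k → Bool)).card : ℝ)) ∈ Φ := by
    intro z
    refine ⟨{z}, Finset.singleton_nonempty z, ?_, rfl⟩
    rw [hcardV, Finset.card_singleton]
    calc 2 * 1 = 2 ^ 1 := by norm_num
      _ ≤ 2 ^ k := Nat.pow_le_pow_right (by norm_num) hk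
  have hne : Φ.Nonempty := ⟨_, hsingle (fun _ => false)⟩
  constructor
  · rw [hphi]
    exact le_csInf hne hlow
  · rcases Nat.lt_or_ge k 9 with hk8 | hk9
    · -- small k : use a singleton
      set z : Fin k → Bool := fun _ => false with hz
      have hmem := hsingle z
      have hval : (∑ i ∈ ({z} : Finset (Fin k → Bool)),
          ∑ j ∈ ({z} : Finset (Fin k → Bool))ᶜ, A i j) / (({z} : Finset (Fin k → Bool)).card : ℝ)
          ≤ 8 / (k : ℝ) := by
      -- the value is at most 1, and 1 ≤ 8/k
        have hv1 : (∑ i ∈ ({z} : Finset (Fin k → Bool)),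
            ∑ j ∈ ({z} : Finset (Fin k → Bool))ᶜ, A i j) ≤ 1 := by
          rw [Finset.sum_singleton, ← hrow z]
          exact Finset.sum_le_sum_of_subset_of_nonneg (Finset.subset_univ _)
            (fun j _ _ => hA0 z j)
        have h8k : (1 : ℝ) ≤ 8 / (k : ℝ) := by
          rw [le_div_iff₀ hkR]
          have : (k : ℝ) ≤ 8 := by exact_mod_cast Nat.lt_succ_iff.mp hk8
          linarith
        rw [Finset.card_singleton]
        push_cast
        calc (∑ i ∈ ({z} : Finset (Fin k → Bool)),
            ∑ j ∈ ({z} : Finset (Fin k → Bool))ᶜ, A i j) / 1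
            ≤ 1 := by rw [div_one]; exact hv1
          _ ≤ 8 / (k : ℝ) := h8k
      exact le_trans (csInf_le hbdd hmem) hval
    · obtain ⟨S, hS1, hS2, hS3⟩ := upper_run k hk9 A hAdef hrow
      exact le_trans (csInf_le hbdd ⟨S, hS1, hS2, rfl⟩) hS3
end

section
/- Let A be a 1/2-lazy (A_{ii} ≥ 1/2 for all i) irreducible nonnegative matrix with largest eigenvalue 1 and a common positive left-and-right eigenvector w. Then λ₂(AAᵀ) ≤ λ₂((A + Aᵀ)/2). -/
open Matrix Finset

/-- Contraction: a nonnegative matrix with common positive left/right eigenvector `w`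
(eigenvalue 1) is a contraction in the Euclidean norm. -/
lemma fill_contract {n : ℕ} (B : Matrix (Fin n) (Fin n) ℝ) (w : Fin n → ℝ)
    (hw : ∀ i, 0 < w i) (hB : ∀ i j, 0 ≤ B i j)
    (hBw : B.mulVec w = w) (hwB : B.vecMul w = w) (x : Fin n → ℝ) :
    (B.mulVec x) ⬝ᵥ (B.mulVec x) ≤ x ⬝ᵥ x := by
  have key : ∀ i, (∑ j, B i j * x j) ^ 2 ≤ w i * ∑ j, B i j * (x j ^ 2 / w j) := by
    intro i
    have cs := Finset.sum_mul_sq_le_sq_mul_sq Finset.univ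
      (fun j => Real.sqrt (B i j) * Real.sqrt (w j))
      (fun j => Real.sqrt (B i j) * x j / Real.sqrt (w j))
    have h1 : ∀ j, (Real.sqrt (B i j) * Real.sqrt (w j)) *
        (Real.sqrt (B i j) * x j / Real.sqrt (w j)) = B i j * x j := by
      intro j
      have hwj : Real.sqrt (w j) ≠ 0 := ne_of_gt (Real.sqrt_pos.2 (hw j))
      have : (Real.sqrt (B i j) * Real.sqrt (w j)) *
          (Real.sqrt (B i j) * x j / Real.sqrt (w j))
          = (Real.sqrt (B i j) * Real.sqrt (B i j)) * (Real.sqrt (w j) / Real.sqrt (w j)) * x j := by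
        ring
      rw [this, Real.mul_self_sqrt (hB i j), div_self hwj, mul_one]
    have h2 : ∀ j, (Real.sqrt (B i j) * Real.sqrt (w j)) ^ 2 = B i j * w j := by
      intro j
      rw [mul_pow, Real.sq_sqrt (hB i j), Real.sq_sqrt (le_of_lt (hw j))]
    have h3 : ∀ j, (Real.sqrt (B i j) * x j / Real.sqrt (w j)) ^ 2 = B i j * (x j ^ 2 / w j) := by
      intro j
      rw [div_pow, mul_pow, Real.sq_sqrt (hB i j), Real.sq_sqrt (le_of_lt (hw j))]
      ring
    simp only [h1, h2, h3] at cs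
    have hBwi : ∑ j, B i j * w j = w i := by
      have := congrFun hBw i
      simpa [Matrix.mulVec, dotProduct] using this
    rwa [hBwi] at cs
  have swap : ∑ i, w i * ∑ j, B i j * (x j ^ 2 / w j) = ∑ j, x j ^ 2 := by
    simp_rw [Finset.mul_sum]
    rw [Finset.sum_comm]
    refine Finset.sum_congr rfl fun j _ => ?_
    have hwBj : ∑ i, w i * B i j = w j := by
      have := congrFun hwB j
      simpa [Matrix.vecMul, dotProduct] using this
    calc ∑ i, w i * (B i j * (x j ^ 2 / w j)) = (∑ i, w i * B i j) * (x j ^ 2 / w j) := by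
          rw [Finset.sum_mul]; exact Finset.sum_congr rfl fun i _ => by ring
      _ = x j ^ 2 := by rw [hwBj, mul_comm, div_mul_cancel₀ _ (ne_of_gt (hw j))]
  calc (B.mulVec x) ⬝ᵥ (B.mulVec x) = ∑ i, (∑ j, B i j * x j) ^ 2 := by
        simp [Matrix.mulVec, dotProduct, sq]
    _ ≤ ∑ i, w i * ∑ j, B i j * (x j ^ 2 / w j) := Finset.sum_le_sum fun i _ => key i
    _ = ∑ j, x j ^ 2 := swap
    _ = x ⬝ᵥ x := by simp [dotProduct, sq]

/-- Rayleigh bound for such a matrix on unit vectors. -/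
lemma fill_rayleigh_le {n : ℕ} (B : Matrix (Fin n) (Fin n) ℝ) (w : Fin n → ℝ)
    (hw : ∀ i, 0 < w i) (hB : ∀ i j, 0 ≤ B i j)
    (hBw : B.mulVec w = w) (hwB : B.vecMul w = w) (x : Fin n → ℝ) (hx : x ⬝ᵥ x = 1) :
    x ⬝ᵥ B.mulVec x ≤ 1 := by
  have h1 : (B.mulVec x) ⬝ᵥ (B.mulVec x) ≤ 1 := by
    rw [← hx]; exact fill_contract B w hw hB hBw hwB x
  have cs := Finset.sum_mul_sq_le_sq_mul_sq Finset.univ x (B.mulVec x)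
  have hxx : ∑ i, x i ^ 2 = 1 := by rw [← hx]; simp [dotProduct, sq]
  have hbb : ∑ i, B.mulVec x i ^ 2 = (B.mulVec x) ⬝ᵥ (B.mulVec x) := by
    simp [dotProduct, sq]
  rw [hxx, hbb, one_mul] at cs
  have hd : x ⬝ᵥ B.mulVec x = ∑ i, x i * B.mulVec x i := rfl
  rw [hd]
  nlinarith [cs, h1]

/-- The second largest eigenvalue of a symmetric matrix whose top eigenvector is `w`:
the supremum of the Rayleigh quotient over unit vectors orthogonal to `w`. -/
noncomputable def lam2 {n : ℕ} (M : Matrix (Fin n) (Fin n) ℝ) (w : Fin n → ℝ) : ℝ :=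
  sSup {r : ℝ | ∃ x : Fin n → ℝ, x ⬝ᵥ w = 0 ∧ x ⬝ᵥ x = 1 ∧ r = x ⬝ᵥ M.mulVec x}

/-- Fill's lemma -/
theorem stmt_16 {n : ℕ} (A : Matrix (Fin n) (Fin n) ℝ)
    (hA : ∀ i j, 0 ≤ A i j)
    (hlazy : ∀ i, (1 / 2 : ℝ) ≤ A i i)
    (hirr : ∀ s t : Fin n, ∃ k : ℕ, 0 < k ∧ 0 < (A ^ k) s t)
    (w : Fin n → ℝ) (hw : ∀ i, 0 < w i)
    (hAw : A.mulVec w = w) (hwA : A.vecMul w = w) :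
    lam2 (A * Aᵀ) w ≤ lam2 ((1 / 2 : ℝ) • (A + Aᵀ)) w := by
  set S : Matrix (Fin n) (Fin n) ℝ := (1 / 2 : ℝ) • (A + Aᵀ) with hSdef
  set B : Matrix (Fin n) (Fin n) ℝ := (2 : ℝ) • A - 1 with hBdef
  have hAtw : Aᵀ.mulVec w = w := by rw [Matrix.mulVec_transpose, hwA]
  have hwAt : Aᵀ.vecMul w = w := by rw [Matrix.vecMul_transpose, hAw]
  have hBt : Bᵀ = (2 : ℝ) • Aᵀ - 1 := by
    simp [hBdef, Matrix.transpose_sub, Matrix.transpose_smul]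
  have hwB : B.vecMul w = w := by
    funext j
    have hj := congrFun hwA j
    simp only [Matrix.vecMul, dotProduct] at hj ⊢
    simp only [hBdef, Matrix.sub_apply, Matrix.smul_apply, Matrix.one_apply, smul_eq_mul,
      mul_sub, mul_ite, mul_one, mul_zero, Finset.sum_sub_distrib, Finset.sum_ite_eq']
    simp only [Finset.mem_univ, if_true]
    have h2 : ∑ i, w i * (2 * A i j) = 2 * ∑ i, w i * A i j := by
      rw [Finset.mul_sum]; exact Finset.sum_congr rfl fun i _ => by ring
    rw [h2, hj]; ring
  have hBw : B.mulVec w = w := by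
    rw [hBdef, Matrix.sub_mulVec, Matrix.smul_mulVec, hAw, Matrix.one_mulVec]
    funext i; simp; ring
  have hBtw : Bᵀ.mulVec w = w := by rw [Matrix.mulVec_transpose, hwB]
  have hwBt : Bᵀ.vecMul w = w := by rw [Matrix.vecMul_transpose, hBw]
  have hBtnn : ∀ i j, 0 ≤ Bᵀ i j := by
    intro i j
    rw [hBt]
    by_cases h : i = j
    · subst h
      simp [Matrix.one_apply]
      nlinarith [hlazy i]
    · simp [Matrix.one_apply, h, Matrix.sub_apply]
      nlinarith [hA j i]
  have hSnn : ∀ i j, 0 ≤ S i j := by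
    intro i j
    simp only [hSdef, Matrix.smul_apply, Matrix.add_apply, Matrix.transpose_apply, smul_eq_mul]
    nlinarith [hA i j, hA j i]
  have hSw : S.mulVec w = w := by
    rw [hSdef, Matrix.smul_mulVec, Matrix.add_mulVec, hAw, hAtw]
    funext i; simp; ring
  have hwS : S.vecMul w = w := by
    funext j
    have := congrFun hSw j
    rw [hSdef]
    rw [hSdef] at this
    simp only [Matrix.vecMul, Matrix.mulVec, dotProduct, Matrix.smul_apply, Matrix.add_apply,
      Matrix.transpose_apply, smul_eq_mul] at this ⊢
    calc ∑ i, w i * (1 / 2 * (A i j + Aᵀ i j))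
        = ∑ i, 1 / 2 * (A j i + Aᵀ j i) * w i := by
          exact Finset.sum_congr rfl fun i _ => by simp [Matrix.transpose_apply]; ring
      _ = w j := this
  have hId : A * Aᵀ = S + (1 / 4 : ℝ) • (B * Bᵀ) - (1 / 4 : ℝ) • 1 := by
    rw [hSdef, hBt, hBdef]
    simp only [Matrix.sub_mul, Matrix.mul_sub, Matrix.smul_mul, Matrix.mul_smul,
      smul_smul, smul_sub, smul_add, Matrix.mul_one, Matrix.one_mul]
    module
  -- key pointwise inequality
  have keystep : ∀ x : Fin n → ℝ, x ⬝ᵥ x = 1 →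
      x ⬝ᵥ (A * Aᵀ).mulVec x ≤ x ⬝ᵥ S.mulVec x := by
    intro x hx
    have hBB : x ⬝ᵥ (B * Bᵀ).mulVec x ≤ 1 := by
      have h1 : (B * Bᵀ).mulVec x = B.mulVec (Bᵀ.mulVec x) := by
        rw [← Matrix.mulVec_mulVec]
      have h2 : x ⬝ᵥ B.mulVec (Bᵀ.mulVec x) = (Bᵀ.mulVec x) ⬝ᵥ (Bᵀ.mulVec x) := by
        rw [Matrix.dotProduct_mulVec, ← Matrix.mulVec_transpose]
      rw [h1, h2, ← hx]
      exact fill_contract Bᵀ w hw hBtnn hBtw hwBt x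
    have expand : x ⬝ᵥ (A * Aᵀ).mulVec x
        = x ⬝ᵥ S.mulVec x + (1 / 4 : ℝ) * (x ⬝ᵥ (B * Bᵀ).mulVec x) - (1 / 4 : ℝ) := by
      rw [hId]
      simp only [Matrix.sub_mulVec, Matrix.add_mulVec, Matrix.smul_mulVec,
        Matrix.one_mulVec, dotProduct_sub, dotProduct_add, dotProduct_smul,
        smul_eq_mul, hx]
      ring
    rw [expand]
    nlinarith [hBB]
  -- now the sup argument
  unfold lam2
  by_cases hne : ∃ x : Fin n → ℝ, x ⬝ᵥ w = 0 ∧ x ⬝ᵥ x = 1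
  · obtain ⟨x₀, hx₀w, hx₀x⟩ := hne
    have hbdd : BddAbove {r : ℝ | ∃ x : Fin n → ℝ,
        x ⬝ᵥ w = 0 ∧ x ⬝ᵥ x = 1 ∧ r = x ⬝ᵥ S.mulVec x} := by
      refine ⟨1, fun r hr => ?_⟩
      obtain ⟨x, _, hx2, rfl⟩ := hr
      exact fill_rayleigh_le S w hw hSnn hSw hwS x hx2
    refine csSup_le ⟨x₀ ⬝ᵥ (A * Aᵀ).mulVec x₀, x₀, hx₀w, hx₀x, rfl⟩ ?_
    rintro r ⟨x, hx1, hx2, rfl⟩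
    calc x ⬝ᵥ (A * Aᵀ).mulVec x ≤ x ⬝ᵥ S.mulVec x := keystep x hx2
      _ ≤ sSup {r : ℝ | ∃ x : Fin n → ℝ,
            x ⬝ᵥ w = 0 ∧ x ⬝ᵥ x = 1 ∧ r = x ⬝ᵥ S.mulVec x} :=
        le_csSup hbdd ⟨x, hx1, hx2, rfl⟩
  · have h1 : {r : ℝ | ∃ x : Fin n → ℝ,
        x ⬝ᵥ w = 0 ∧ x ⬝ᵥ x = 1 ∧ r = x ⬝ᵥ (A * Aᵀ).mulVec x} = ∅ := by
      ext r; simp only [Set.mem_setOf_eq, Set.mem_empty_iff_false, iff_false]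
      rintro ⟨x, hx1, hx2, _⟩; exact hne ⟨x, hx1, hx2⟩
    have h2 : {r : ℝ | ∃ x : Fin n → ℝ,
        x ⬝ᵥ w = 0 ∧ x ⬝ᵥ x = 1 ∧ r = x ⬝ᵥ S.mulVec x} = ∅ := by
      ext r; simp only [Set.mem_setOf_eq, Set.mem_empty_iff_false, iff_false]
      rintro ⟨x, hx1, hx2, _⟩; exact hne ⟨x, hx1, hx2⟩
    rw [h1, h2]
end

section
/- Let R ∈ ℂ^{n×n} be such that (R + R*)/2 is positive definite. Then R is invertible, (R⁻¹ + (R*)⁻¹)/2 is positive definite, and ((R + R*)/2)⁻¹ ⪰ (R⁻¹ + (R*)⁻¹)/2 in the Loewner order. -/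
open Matrix
open scoped ComplexOrder

lemma posDef_mul_mul_conjTranspose {n : ℕ} {A B : Matrix (Fin n) (Fin n) ℂ}
    (hA : A.PosDef) (hB : IsUnit B) : (B * A * Bᴴ).PosDef := by
  refine PosDef.of_dotProduct_mulVec_pos ?_ (fun x hx => ?_)
  · have := hA.isHermitian
    unfold Matrix.IsHermitian at *
    simp [Matrix.mul_assoc, this]
  · have hBx : Bᴴ *ᵥ x ≠ 0 := by
      have : IsUnit Bᴴ := by
        rw [Matrix.isUnit_iff_isUnit_det] at hB ⊢
        simpa [Matrix.det_conjTranspose] using hB.star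
      exact (Matrix.mulVec_injective_iff_isUnit.mpr this |>.ne_iff' (by simp)).2 hx
    simpa only [star_mulVec, dotProduct_mulVec, vecMul_vecMul, conjTranspose_conjTranspose]
      using hA.dotProduct_mulVec_pos hBx

theorem stmt_17 {n : ℕ} (R : Matrix (Fin n) (Fin n) ℂ)
    (hL : (((1 : ℂ) / 2) • (R + Rᴴ)).PosDef) :
    IsUnit R ∧
    (((1 : ℂ) / 2) • (R⁻¹ + (Rᴴ)⁻¹)).PosDef ∧
    ((((1 : ℂ) / 2) • (R + Rᴴ))⁻¹ - ((1 : ℂ) / 2) • (R⁻¹ + (Rᴴ)⁻¹)).PosSemidef := by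
  set L : Matrix (Fin n) (Fin n) ℂ := ((1 : ℂ) / 2) • (R + Rᴴ) with hLdef
  have hLH : Lᴴ = L := hL.isHermitian
  -- R is invertible
  have hU : IsUnit R := by
    rw [Matrix.isUnit_iff_isUnit_det]
    rw [isUnit_iff_ne_zero]
    intro hdet
    obtain ⟨v, hv, hRv⟩ := (Matrix.exists_mulVec_eq_zero_iff).2 hdet
    have hpos := hL.dotProduct_mulVec_pos hv
    have : star v ⬝ᵥ (L *ᵥ v) = 0 := by
      have h2 : star v ⬝ᵥ (Rᴴ *ᵥ v) = 0 := by
        rw [dotProduct_mulVec, ← star_mulVec, hRv]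
        simp
      have h1 : star v ⬝ᵥ (R *ᵥ v) = 0 := by rw [hRv]; simp
      simp [hLdef, Matrix.add_mulVec, Matrix.smul_mulVec, dotProduct_add, h1, h2]
    rw [this] at hpos
    exact lt_irrefl 0 hpos
  have hRR : R⁻¹ * R = 1 := Matrix.nonsing_inv_mul R (Matrix.isUnit_iff_isUnit_det R |>.1 hU)
  have hUH : IsUnit Rᴴ := by
    rw [Matrix.isUnit_iff_isUnit_det] at hU ⊢
    simpa [Matrix.det_conjTranspose] using hU.star
  have hHH : Rᴴ * (Rᴴ)⁻¹ = 1 := Matrix.mul_nonsing_inv _ (Matrix.isUnit_iff_isUnit_det _ |>.1 hUH)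
  have hinvH : R⁻¹ᴴ = (Rᴴ)⁻¹ := Matrix.conjTranspose_nonsing_inv R
  -- key identity: (1/2)•(R⁻¹ + Rᴴ⁻¹) = R⁻¹ * L * (R⁻¹)ᴴ
  have E1 : ((1 : ℂ) / 2) • (R⁻¹ + (Rᴴ)⁻¹) = R⁻¹ * L * R⁻¹ᴴ := by
    rw [hinvH, hLdef]
    rw [Matrix.mul_smul, Matrix.smul_mul]
    congr 1
    rw [Matrix.mul_add, Matrix.add_mul, hRR, Matrix.one_mul, Matrix.mul_assoc, hHH,
      Matrix.mul_one, add_comm]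
  have hpd2 : (((1 : ℂ) / 2) • (R⁻¹ + (Rᴴ)⁻¹)).PosDef := by
    rw [E1]
    exact posDef_mul_mul_conjTranspose hL ((Matrix.isUnit_nonsing_inv_iff).2 hU)
  refine ⟨hU, hpd2, ?_⟩
  -- the skew part
  set Q : Matrix (Fin n) (Fin n) ℂ := R - L with hQdef
  have hQH : Qᴴ = -Q := by
    rw [hQdef, conjTranspose_sub, hLH, hLdef]
    ext i j
    simp [Matrix.sub_apply, Matrix.neg_apply, Matrix.smul_apply, Matrix.add_apply]
    ring
  have hRLQ : R = L + Q := by rw [hQdef]; abel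
  have hRH : Rᴴ = L - Q := by
    conv_lhs => rw [hRLQ]
    rw [conjTranspose_add, hLH, hQH, sub_eq_add_neg]
  have hLU : IsUnit L.det := Matrix.isUnit_iff_isUnit_det L |>.1 hL.isUnit
  have hLL : L * L⁻¹ = 1 := Matrix.mul_nonsing_inv L hLU
  have hLL' : L⁻¹ * L = 1 := Matrix.nonsing_inv_mul L hLU
  have I2 : R * L⁻¹ * Rᴴ - L = Qᴴ * L⁻¹ * Q := by
    rw [hQH, hRH]
    conv_lhs => rw [hRLQ]
    have h1 : Q * L⁻¹ * (L - Q) = Q - Q * L⁻¹ * Q := by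
      rw [Matrix.mul_sub, Matrix.mul_assoc Q L⁻¹ L, hLL', Matrix.mul_one]
    rw [Matrix.add_mul, Matrix.add_mul, hLL, Matrix.one_mul, h1]
    have h2 : (-Q) * L⁻¹ * Q = -(Q * L⁻¹ * Q) := by
      rw [Matrix.neg_mul, Matrix.neg_mul]
    rw [h2]
    abel
  have I3 : L⁻¹ - R⁻¹ * L * (Rᴴ)⁻¹ = R⁻¹ * (R * L⁻¹ * Rᴴ - L) * (Rᴴ)⁻¹ := by
    rw [Matrix.mul_sub, Matrix.sub_mul]
    congr 1
    simp only [Matrix.mul_assoc]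
    rw [hHH, Matrix.mul_one, ← Matrix.mul_assoc, hRR, Matrix.one_mul]
  have Egoal : L⁻¹ - ((1 : ℂ) / 2) • (R⁻¹ + (Rᴴ)⁻¹)
      = (R⁻¹ * Qᴴ) * L⁻¹ * (R⁻¹ * Qᴴ)ᴴ := by
    rw [E1, hinvH, I3, I2]
    rw [conjTranspose_mul, conjTranspose_conjTranspose, hinvH]
    noncomm_ring
  rw [Egoal]
  exact (hL.inv.posSemidef).mul_mul_conjTranspose_same (R⁻¹ * Qᴴ)
end

section
/- Let R ∈ ℂ^{n×n} with L = (R + R*)/2 positive definite and Q = (R − R*)/2. Define W_α = L + αQ for real α. Then for all real α, β with |α| ≤ |β| ≤ 1: (W_α⁻¹ + (W_α*)⁻¹)/2 ⪰ (W_β⁻¹ + (W_β*)⁻¹)/2 in the Loewner order. -/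
open Matrix
open scoped ComplexOrder

lemma key_inv_mono {n : ℕ} {A : Matrix (Fin n) (Fin n) ℂ} (hA : A.PosSemidef) {a b : ℝ}
    (ha : 0 ≤ a) (hab : a ≤ b) :
    ((1 + (a:ℂ) • A)⁻¹ - (1 + (b:ℂ) • A)⁻¹).PosSemidef := by
  classical
  have hH : A.IsHermitian := hA.1
  set U : Matrix (Fin n) (Fin n) ℂ := (hH.eigenvectorUnitary : Matrix (Fin n) (Fin n) ℂ) with hUdef
  have hU1 : star U * U = 1 := Unitary.coe_star_mul_self hH.eigenvectorUnitary
  have hU2 : U * star U = 1 := Unitary.coe_mul_star_self hH.eigenvectorUnitary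
  have hUinv : U⁻¹ = star U := Matrix.inv_eq_left_inv hU1
  have hUinv' : (star U)⁻¹ = U := Matrix.inv_eq_left_inv hU2
  have hform : ∀ c : ℝ, 0 ≤ c → (1 + (c:ℂ) • A)⁻¹
      = U * diagonal (fun i => (((1 + c * hH.eigenvalues i)⁻¹ : ℝ) : ℂ)) * star U := by
    intro c hc
    have hpos : ∀ i, (0:ℝ) < 1 + c * hH.eigenvalues i := fun i =>
      add_pos_of_pos_of_nonneg one_pos (mul_nonneg hc (hA.eigenvalues_nonneg i))
    have h1 : 1 + (c:ℂ) • A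
        = U * diagonal (fun i => (((1 + c * hH.eigenvalues i) : ℝ) : ℂ)) * star U := by
      have hd : diagonal (fun i => (((1 + c * hH.eigenvalues i) : ℝ) : ℂ))
          = 1 + (c:ℂ) • diagonal (RCLike.ofReal ∘ hH.eigenvalues) := by
        ext i j
        rcases eq_or_ne i j with rfl | hij
        · simp only [diagonal_apply_eq, Matrix.add_apply, Matrix.smul_apply,
            Matrix.one_apply_eq, Function.comp_apply, smul_eq_mul]
          push_cast
          rfl
        · simp [diagonal_apply_ne _ hij, Matrix.one_apply_ne hij]
      rw [hd, mul_add, add_mul, mul_one, hU2, Matrix.mul_smul, Matrix.smul_mul,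
        hUdef, ← Unitary.conjStarAlgAut_apply (S := ℂ), ← hH.spectral_theorem]
    have hDinv : (diagonal (fun i => (((1 + c * hH.eigenvalues i) : ℝ) : ℂ)))⁻¹
        = diagonal (fun i => (((1 + c * hH.eigenvalues i)⁻¹ : ℝ) : ℂ)) := by
      apply Matrix.inv_eq_right_inv
      rw [diagonal_mul_diagonal]
      have he : (fun i => (((1 + c * hH.eigenvalues i) : ℝ) : ℂ) *
          (((1 + c * hH.eigenvalues i)⁻¹ : ℝ) : ℂ)) = fun _ => (1:ℂ) := by
        funext i
        rw [← Complex.ofReal_mul, mul_inv_cancel₀ (hpos i).ne']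
        simp
      rw [he, diagonal_one]
    rw [h1, Matrix.mul_inv_rev, Matrix.mul_inv_rev, hUinv, hUinv', hDinv, Matrix.mul_assoc]
  rw [hform a ha, hform b (ha.trans hab), ← Matrix.sub_mul, ← Matrix.mul_sub, diagonal_sub,
    Matrix.star_eq_conjTranspose]
  refine Matrix.PosSemidef.mul_mul_conjTranspose_same ?_ U
  refine posSemidef_diagonal_iff.mpr fun i => ?_
  rw [← Complex.ofReal_sub, Complex.zero_le_real]
  have hpa : (0:ℝ) < 1 + a * hH.eigenvalues i :=
    add_pos_of_pos_of_nonneg one_pos (mul_nonneg ha (hA.eigenvalues_nonneg i))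
  have hle : 1 + a * hH.eigenvalues i ≤ 1 + b * hH.eigenvalues i := by
    have := mul_le_mul_of_nonneg_right hab (hA.eigenvalues_nonneg i)
    linarith
  have := one_div_le_one_div_of_le hpa hle
  simp only [one_div] at this
  linarith


lemma half_sum_inv {n : ℕ} (P S W : Matrix (Fin n) (Fin n) ℂ) (hP : Pᴴ = P)
    (hPdet : IsUnit P.det) (hS : Sᴴ = -S) (c : ℝ)
    (hW : W = P * (1 + (c:ℂ) • S) * P) :
    ((1:ℂ)/2) • (W⁻¹ + (Wᴴ)⁻¹) = P⁻¹ * (1 + ((c^2 : ℝ) : ℂ) • (Sᴴ * S))⁻¹ * P⁻¹ := by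
  set X : Matrix (Fin n) (Fin n) ℂ := 1 + (c:ℂ) • S with hX
  set Y : Matrix (Fin n) (Fin n) ℂ := 1 - (c:ℂ) • S with hY
  set M : Matrix (Fin n) (Fin n) ℂ := 1 + ((c^2 : ℝ) : ℂ) • (Sᴴ * S) with hM
  have hcc : ((c^2 : ℝ) : ℂ) = (c:ℂ) * (c:ℂ) := by push_cast; ring
  have hXh : Xᴴ = Y := by
    rw [hX, hY, conjTranspose_add, conjTranspose_one, conjTranspose_smul, hS]
    push_cast
    simp [sub_eq_add_neg]
  have hYX : Y * X = M := by
    rw [hX, hY, hM, hS, hcc]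
    simp only [sub_mul, mul_add, one_mul, mul_one, Matrix.smul_mul, Matrix.mul_smul,
      smul_smul, Matrix.neg_mul, smul_neg]
    abel
  have hXY : X * Y = M := by
    rw [hX, hY, hM, hS, hcc]
    simp only [mul_sub, add_mul, one_mul, mul_one, Matrix.smul_mul, Matrix.mul_smul,
      smul_smul, Matrix.neg_mul, smul_neg]
    abel
  have hMpd : M.PosDef := by
    have hsm : ((c^2 : ℝ) : ℂ) • (Sᴴ * S) = ((c:ℂ) • S)ᴴ * ((c:ℂ) • S) := by
      rw [conjTranspose_smul, Matrix.smul_mul, Matrix.mul_smul, smul_smul,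
        Complex.star_def, Complex.conj_ofReal, hcc]
    rw [hM, hsm]
    exact Matrix.PosDef.add_posSemidef Matrix.PosDef.one
      (Matrix.posSemidef_conjTranspose_mul_self _)
  have hMdet : IsUnit M.det := (Matrix.isUnit_iff_isUnit_det M).mp hMpd.isUnit
  have hXdet : IsUnit X.det := by
    apply isUnit_of_mul_isUnit_left (y := Y.det)
    rw [← Matrix.det_mul, hXY]; exact hMdet
  have hYdet : IsUnit Y.det := by
    apply isUnit_of_mul_isUnit_left (y := X.det)
    rw [← Matrix.det_mul, hYX]; exact hMdet
  have h2 : Y + X = (2:ℂ) • (1 : Matrix (Fin n) (Fin n) ℂ) := by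
    rw [hX, hY]; module
  have e1 : X⁻¹ * (Y + X) * Y⁻¹ = X⁻¹ + Y⁻¹ := by
    rw [mul_add, add_mul, Matrix.mul_assoc, Matrix.mul_nonsing_inv _ hYdet, mul_one,
      Matrix.mul_assoc, ← Matrix.mul_assoc X⁻¹ X, Matrix.nonsing_inv_mul _ hXdet, one_mul]
  have e2 : X⁻¹ + Y⁻¹ = (2:ℂ) • M⁻¹ := by
    rw [← e1, h2, Matrix.mul_smul, Matrix.smul_mul, mul_one, ← Matrix.mul_inv_rev, hYX]
  have hWinv : W⁻¹ = P⁻¹ * (X⁻¹ * P⁻¹) := by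
    rw [hW, Matrix.mul_inv_rev, Matrix.mul_inv_rev]
  have hWH : Wᴴ = P * Y * P := by
    rw [hW, conjTranspose_mul, conjTranspose_mul, hXh, hP, Matrix.mul_assoc]
  have hWHinv : (Wᴴ)⁻¹ = P⁻¹ * (Y⁻¹ * P⁻¹) := by
    rw [hWH, Matrix.mul_inv_rev, Matrix.mul_inv_rev]
  rw [hWinv, hWHinv, ← Matrix.mul_add, ← Matrix.add_mul, e2, Matrix.smul_mul, Matrix.mul_smul,
    smul_smul, Matrix.mul_assoc]
  norm_num



/-- monotonicity of the symmetrized inverse along the pencil `W_α = L + αQ`. -/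
theorem stmt_18 {n : ℕ} (R : Matrix (Fin n) (Fin n) ℂ)
    (L Q : Matrix (Fin n) (Fin n) ℂ)
    (hLdef : L = ((1 : ℂ) / 2) • (R + Rᴴ))
    (hQdef : Q = ((1 : ℂ) / 2) • (R - Rᴴ))
    (hL : L.PosDef)
    (α β : ℝ) (hαβ : |α| ≤ |β|) (hβ : |β| ≤ 1)
    (Wα Wβ : Matrix (Fin n) (Fin n) ℂ)
    (hWα : Wα = L + (α : ℂ) • Q) (hWβ : Wβ = L + (β : ℂ) • Q) :
    (((1 : ℂ) / 2) • (Wα⁻¹ + (Wαᴴ)⁻¹) - ((1 : ℂ) / 2) • (Wβ⁻¹ + (Wβᴴ)⁻¹)).PosSemidef := by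
  classical
  have hQs : Qᴴ = -Q := by
    rw [hQdef]
    rw [conjTranspose_smul, conjTranspose_sub, conjTranspose_conjTranspose]
    rw [show star ((1:ℂ)/2) = (1:ℂ)/2 by norm_num]
    rw [← smul_neg, neg_sub]
  obtain ⟨P, hPP, hPh⟩ : ∃ P : Matrix (Fin n) (Fin n) ℂ, P * P = L ∧ Pᴴ = P := by
    open MatrixOrder in
    exact ⟨CFC.sqrt L, CFC.sqrt_mul_sqrt_self L hL.posSemidef.nonneg,
      (Matrix.nonneg_iff_posSemidef.mp (CFC.sqrt_nonneg L)).isHermitian⟩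
  have hPdet : IsUnit P.det := by
    have hLdet : L.det ≠ 0 := hL.det_pos.ne'
    have : P.det * P.det = L.det := by rw [← Matrix.det_mul, hPP]
    rw [isUnit_iff_ne_zero]
    intro h
    rw [h, mul_zero] at this
    exact hLdet this.symm
  have hPi : P * P⁻¹ = 1 := Matrix.mul_nonsing_inv _ hPdet
  have hiP : P⁻¹ * P = 1 := Matrix.nonsing_inv_mul _ hPdet
  have hPinvH : (P⁻¹)ᴴ = P⁻¹ := by rw [Matrix.conjTranspose_nonsing_inv, hPh]
  set S : Matrix (Fin n) (Fin n) ℂ := P⁻¹ * Q * P⁻¹ with hSdef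
  have hSs : Sᴴ = -S := by
    rw [hSdef, conjTranspose_mul, conjTranspose_mul, hPinvH, hQs]
    simp [Matrix.mul_assoc, Matrix.neg_mul, Matrix.mul_neg]
  have hPSP : P * S * P = Q := by
    have h1 : P * (P⁻¹ * Q * P⁻¹) * P = (P * P⁻¹) * Q * (P⁻¹ * P) := by noncomm_ring
    rw [hSdef, h1, hPi, hiP, one_mul, mul_one]
  have expand : ∀ c : ℂ, P * (1 + c • S) * P = L + c • Q := by
    intro c
    rw [mul_add, mul_one, add_mul, hPP, Matrix.mul_smul, Matrix.smul_mul, hPSP]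
  have hα2 := half_sum_inv P S Wα hPh hPdet hSs α (by rw [hWα, expand])
  have hβ2 := half_sum_inv P S Wβ hPh hPdet hSs β (by rw [hWβ, expand])
  rw [hα2, hβ2]
  have hsplit : P⁻¹ * (1 + ((α^2 : ℝ) : ℂ) • (Sᴴ * S))⁻¹ * P⁻¹
      - P⁻¹ * (1 + ((β^2 : ℝ) : ℂ) • (Sᴴ * S))⁻¹ * P⁻¹
      = P⁻¹ * ((1 + ((α^2 : ℝ) : ℂ) • (Sᴴ * S))⁻¹ - (1 + ((β^2 : ℝ) : ℂ) • (Sᴴ * S))⁻¹)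
        * (P⁻¹)ᴴ := by
    rw [hPinvH]; noncomm_ring
  rw [hsplit]
  have hab2 : α^2 ≤ β^2 := by
    rw [← sq_abs α, ← sq_abs β]
    exact pow_le_pow_left₀ (abs_nonneg α) hαβ 2
  exact (key_inv_mono (Matrix.posSemidef_conjTranspose_mul_self S)
    (sq_nonneg α) hab2).mul_mul_conjTranspose_same _
end

section
/- Let T be an entrywise positive k-tensor in n dimensions that is 2-line stochastic: ∑_i T_{i, j, l₁,…,l_{k−2}} = 1 and ∑_j T_{i, j, l₁,…,l_{k−2}} = 1 for all choices of the remaining indices. Then the uniform distribution p_i = 1/n is the unique probability distribution p satisfying p_i = ∑_{j₁,…,j_{k−1}} T_{i, j₁, …, j_{k−1}} p_{j₁} ⋯ p_{j_{k−1}} for all i. -/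
open Finset

/-- a positive 2-line stochastic `(m+2)`-tensor has the uniform distribution as
its unique fixed point. The tensor `T i j l` has output index `i`, a distinguished input
index `j`, and `m` further input indices `l`. -/
theorem stmt_19 {n m : ℕ} (hn : 0 < n)
    (T : Fin n → Fin n → (Fin m → Fin n) → ℝ)
    (hpos : ∀ i j l, 0 < T i j l)
    (hstoch_out : ∀ j l, ∑ i, T i j l = 1)
    (hstoch_in : ∀ i l, ∑ j, T i j l = 1) :
    -- the uniform distribution is a fixed point
    (∀ i, (1 : ℝ) / n =
      ∑ j, ∑ l : Fin m → Fin n, T i j l * ((1 : ℝ) / n) * ∏ t : Fin m, ((1 : ℝ) / n)) ∧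
    -- and it is the unique fixed point among probability distributions
    (∀ p : Fin n → ℝ, (∀ i, 0 ≤ p i) → ∑ i, p i = 1 →
      (∀ i, p i = ∑ j, ∑ l : Fin m → Fin n, T i j l * p j * ∏ t : Fin m, p (l t)) →
      p = fun _ => (1 : ℝ) / n) := by
  have hn0 : (n : ℝ) ≠ 0 := Nat.cast_ne_zero.2 hn.ne'
  constructor
  · intro i
    have h1 : ∑ j, ∑ l : Fin m → Fin n, T i j l * ((1 : ℝ) / n) * ∏ t : Fin m, ((1 : ℝ) / n)
        = (∑ l : Fin m → Fin n, ∑ j, T i j l) * (((1 : ℝ) / n) * ((1 : ℝ) / n) ^ m) := by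
      rw [Finset.sum_comm, Finset.sum_mul]
      refine Finset.sum_congr rfl fun l _ => ?_
      rw [Finset.sum_mul]
      refine Finset.sum_congr rfl fun j _ => ?_
      rw [Finset.prod_const]
      simp [Finset.card_univ]
      ring
    rw [h1]
    simp only [hstoch_in]
    rw [Finset.sum_const, Finset.card_univ]
    simp [Fintype.card_fun]
    field_simp
  · intro p hp hsum hfix
    set A : Fin n → Fin n → ℝ := fun i j => ∑ l : Fin m → Fin n, T i j l * ∏ t, p (l t) with hA
    have hprodsum : ∑ l : Fin m → Fin n, ∏ t, p (l t) = 1 := by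
      rw [← Fintype.piFinset_univ, ← Finset.prod_univ_sum]
      simp [hsum]
    have hnn : ∀ l : Fin m → Fin n, 0 ≤ ∏ t, p (l t) :=
      fun l => Finset.prod_nonneg fun t _ => hp _
    have hArow : ∀ i, ∑ j, A i j = 1 := by
      intro i
      simp only [hA]
      rw [Finset.sum_comm]
      simp_rw [← Finset.sum_mul, hstoch_in, one_mul]
      exact hprodsum
    have hApos : ∀ i j, 0 < A i j := by
      intro i j
      obtain ⟨l0, hl0⟩ : ∃ l : Fin m → Fin n, 0 < ∏ t, p (l t) := by
        by_contra h
        push_neg at h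
        have : ∑ l : Fin m → Fin n, ∏ t, p (l t) = 0 :=
          Finset.sum_eq_zero fun l _ => le_antisymm (h l) (hnn l)
        rw [this] at hprodsum; norm_num at hprodsum
      exact Finset.sum_pos' (fun l _ => mul_nonneg (hpos i j l).le (hnn l))
        ⟨l0, Finset.mem_univ _, mul_pos (hpos i j l0) hl0⟩
    have hfix' : ∀ i, p i = ∑ j, A i j * p j := by
      intro i
      rw [hfix i]
      refine Finset.sum_congr rfl fun j _ => ?_
      simp only [hA]
      rw [Finset.sum_mul]
      refine Finset.sum_congr rfl fun l _ => ?_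
      ring
    obtain ⟨i0, -, hi0⟩ := Finset.exists_max_image (univ : Finset (Fin n)) p
      ⟨⟨0, hn⟩, Finset.mem_univ _⟩
    have h1 : ∑ j, A i0 j * p i0 = p i0 := by rw [← Finset.sum_mul, hArow, one_mul]
    have h0 : ∑ j, A i0 j * (p i0 - p j) = 0 := by
      have h2 := hfix' i0
      have : ∑ j, A i0 j * (p i0 - p j) = ∑ j, A i0 j * p i0 - ∑ j, A i0 j * p j := by
        rw [← Finset.sum_sub_distrib]
        exact Finset.sum_congr rfl fun j _ => by ring
      rw [this, h1, ← h2]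
      ring
    have key : ∀ j, p j = p i0 := by
      intro j
      have hterm := (Finset.sum_eq_zero_iff_of_nonneg
        (fun j _ => mul_nonneg (hApos i0 j).le (sub_nonneg.2 (hi0 j (Finset.mem_univ j))))).1
        h0 j (Finset.mem_univ j)
      rcases mul_eq_zero.1 hterm with h | h
      · exact absurd h (hApos i0 j).ne'
      · linarith [sub_eq_zero.1 h]
    have hval : (n : ℝ) * p i0 = 1 := by
      rw [← hsum]
      simp [key, Finset.card_univ, mul_comm]
    funext j
    rw [key j]
    field_simp
    linarith
end
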